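/- arXiv:0905.0615 — 3 statements merged into one kernel-verified Lean document; each statement's English description precedes it below -/
import Mathlib

section
/- The family of functions (φ_n)_{n≥1} is locally equi-continuous on X × X. In particular φ₁ is continuous on X × X, and φ₁ is a continuous extension of the restriction of the Mañé potential φ to X² ∖ ΔX (the complement of the diagonal). -/
open Metric Set Filter Topology

/-- `X` is a `B`-length space at scale `K`. -/
def IsBLengthSpaceAtScale (X : Type*) [MetricSpace X] (B K : ℝ) : Prop :=
  ∀ x y : X, ∃ (n : ℕ) (p : ℕ → X), p 0 = x ∧ p n = y ∧
    (∀ i < n, dist (p i) (p (i + 1)) ≤ K) ∧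
    ∑ i ∈ Finset.range n, dist (p i) (p (i + 1)) ≤ B * dist x y

/-- Uniform superlinearity of the cost `c`. -/
def UniformlySuperlinear {X : Type*} [MetricSpace X] (c : X → X → ℝ) : Prop :=
  ∀ k : ℝ, 0 ≤ k → ∃ C : ℝ, ∀ x y : X, k * dist x y - C ≤ c x y

/-- Uniform boundedness of the cost `c`. -/
def UniformlyBounded {X : Type*} [MetricSpace X] (c : X → X → ℝ) : Prop :=
  ∀ R : ℝ, ∃ A : ℝ, ∀ x y : X, dist x y ≤ R → c x y ≤ A

/-- `u` is `α`-dominated: `u y - u x ≤ c x y + α` for all `x y`. -/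
def Dominated {X : Type*} (c : X → X → ℝ) (α : ℝ) (u : X → ℝ) : Prop :=
  ∀ x y : X, u y - u x ≤ c x y + α

/-- Negative Lax-Oleinik semigroup. -/
noncomputable def Tm {X : Type*} (c : X → X → ℝ) (u : X → ℝ) (x : X) : ℝ :=
  ⨅ y, (u y + c y x)

/-- Positive Lax-Oleinik semigroup. -/
noncomputable def Tp {X : Type*} (c : X → X → ℝ) (u : X → ℝ) (x : X) : ℝ :=
  ⨆ y, (u y - c x y)

/-- The critical constant `α[0]`: the smallest `α` for which `α`-dominated functions exist. -/
noncomputable def critValue {X : Type*} (c : X → X → ℝ) : ℝ :=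
  sInf {α : ℝ | ∃ u : X → ℝ, Dominated c α u}

/-- The Mañé potential `φ(x,y) = sup_u (u y - u x)`, sup over critical sub-solutions. -/
noncomputable def mane {X : Type*} (c : X → X → ℝ) (x y : X) : ℝ :=
  sSup {r : ℝ | ∃ u : X → ℝ, Dominated c (critValue c) u ∧ r = u y - u x}

/-- A bi-infinite sequence is `(u,c,α)`-calibrated if all its finite subchains of
consecutive terms are calibrated. -/
def IsCalibrated {X : Type*} (c : X → X → ℝ) (α : ℝ) (u : X → ℝ) (x : ℤ → X) : Prop :=
  ∀ (m : ℤ) (k : ℕ), u (x (m + k)) =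
    u (x m) + (∑ i ∈ Finset.range k, c (x (m + i)) (x (m + i + 1))) + k * α

/-- The projected Aubry set of a critical sub-solution `u`. -/
def projAubry {X : Type*} (c : X → X → ℝ) (u : X → ℝ) : Set X :=
  {p : X | ∃ x : ℤ → X, IsCalibrated c (critValue c) u x ∧ x 0 = p}

/-- The set `Â_u` of pairs of consecutive terms of calibrated bi-infinite sequences. -/
def aubryPairs {X : Type*} (c : X → X → ℝ) (u : X → ℝ) : Set (X × X) :=
  {q : X × X | ∃ (x : ℤ → X) (n : ℤ),
    IsCalibrated c (critValue c) u x ∧ x n = q.1 ∧ x (n + 1) = q.2}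

/-- The projected Aubry set `A = ∩_u A_u`, intersection over all critical sub-solutions. -/
def projAubrySet {X : Type*} (c : X → X → ℝ) : Set X :=
  {p : X | ∀ u : X → ℝ, Dominated c (critValue c) u → p ∈ projAubry c u}

/-- The Aubry pair set `Â = ∩_u Â_u`, intersection over all critical sub-solutions. -/
def aubryPairsSet {X : Type*} (c : X → X → ℝ) : Set (X × X) :=
  {q : X × X | ∀ u : X → ℝ, Dominated c (critValue c) u → q ∈ aubryPairs c u}

/-- `c_n(x,y)`: infimum of total cost over chains of length `n` from `x` to `y`. -/
noncomputable def cChain {X : Type*} (c : X → X → ℝ) (n : ℕ) (x y : X) : ℝ :=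
  sInf {r : ℝ | ∃ p : ℕ → X, p 0 = x ∧ p n = y ∧
    r = ∑ i ∈ Finset.range n, c (p i) (p (i + 1))}

/-- `φ_n(x,y) = inf_{k ≥ n} (c_k(x,y) + k·α)`. -/
noncomputable def phiN {X : Type*} (c : X → X → ℝ) (α : ℝ) (n : ℕ) (x y : X) : ℝ :=
  sInf {r : ℝ | ∃ k : ℕ, n ≤ k ∧ r = cChain c k x y + k * α}

/-- The Peierls barrier, with values in the extended reals. -/
noncomputable def peierls {X : Type*} (c : X → X → ℝ) (α : ℝ) (x y : X) : EReal :=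
  Filter.liminf (fun n : ℕ => ((cChain c n x y + n * α : ℝ) : EReal)) Filter.atTop

/-- Negative Lax-Oleinik semigroup on extended-real-valued functions. -/
noncomputable def eTm {X : Type*} (c : X → X → ℝ) (u : X → EReal) (x : X) : EReal :=
  ⨅ y, (u y + (c y x : EReal))

/-- Positive Lax-Oleinik semigroup on extended-real-valued functions. -/
noncomputable def eTp {X : Type*} (c : X → X → ℝ) (u : X → EReal) (x : X) : EReal :=
  ⨆ y, (u y - (c x y : EReal))

section WeakKAMAux

open Finset
set_option linter.unusedSectionVars false
set_option linter.unusedVariables false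

variable {X : Type*} [MetricSpace X] [Nonempty X] {c : X → X → ℝ}

/-- Total cost of a chain of length `k`. -/
noncomputable def chainCost (c : X → X → ℝ) (k : ℕ) (p : ℕ → X) : ℝ :=
  ∑ i ∈ Finset.range k, c (p i) (p (i + 1))

lemma sum_range_split (f : ℕ → ℝ) (m n : ℕ) :
    ∑ i ∈ Finset.range (m + n), f i
      = (∑ i ∈ Finset.range m, f i) + ∑ i ∈ Finset.range n, f (m + i) := by
  induction n with
  | zero => simp
  | succ n ih =>
    rw [← Nat.add_assoc, Finset.sum_range_succ, ih, Finset.sum_range_succ]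
    ring

lemma dominated_chain {α : ℝ} {u : X → ℝ} (hu : Dominated c α u) (p : ℕ → X) :
    ∀ k : ℕ, u (p k) - u (p 0) ≤ chainCost c k p + k * α := by
  intro k
  induction k with
  | zero => simp [chainCost]
  | succ k ih =>
    have h1 := hu (p k) (p (k + 1))
    have h2 : chainCost c (k + 1) p = chainCost c k p + c (p k) (p (k + 1)) :=
      Finset.sum_range_succ _ _
    rw [h2]
    push_cast
    linarith

lemma critSet_nonempty (hsl : UniformlySuperlinear c) :
    {α : ℝ | ∃ u : X → ℝ, Dominated c α u}.Nonempty := by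
  obtain ⟨C, hC⟩ := hsl 0 le_rfl
  refine ⟨C, fun _ => 0, fun x y => ?_⟩
  have := hC x y
  simp only [zero_mul, zero_sub] at this
  simp only [sub_zero, sub_self]
  linarith

lemma critSet_bddBelow (hub : UniformlyBounded c) :
    BddBelow {α : ℝ | ∃ u : X → ℝ, Dominated c α u} := by
  obtain ⟨A, hA⟩ := hub 0
  refine ⟨-A, fun α hα => ?_⟩
  obtain ⟨u, hu⟩ := hα
  have h1 := hu (Classical.arbitrary X) (Classical.arbitrary X)
  have h2 := hA (Classical.arbitrary X) (Classical.arbitrary X) (by simp)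
  linarith

lemma loop_nonneg (hsl : UniformlySuperlinear c) {p : ℕ → X} {k : ℕ}
    (hk : 1 ≤ k) (hloop : p k = p 0) :
    0 ≤ chainCost c k p + k * critValue c := by
  have hkpos : (0 : ℝ) < k := by exact_mod_cast hk
  have hlb : (-chainCost c k p) / k ≤ critValue c := by
    apply le_csInf (critSet_nonempty hsl)
    rintro α ⟨u, hu⟩
    have h1 := dominated_chain hu p k
    rw [hloop] at h1
    rw [div_le_iff₀ hkpos]
    have h2 : α * (k : ℝ) = (k : ℝ) * α := mul_comm _ _
    linarith
  rw [div_le_iff₀ hkpos] at hlb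
  have h2 : critValue c * (k : ℝ) = (k : ℝ) * critValue c := mul_comm _ _
  linarith

lemma chainSet_nonempty {k : ℕ} (hk : 1 ≤ k) (x y : X) :
    {r : ℝ | ∃ p : ℕ → X, p 0 = x ∧ p k = y ∧
      r = ∑ i ∈ Finset.range k, c (p i) (p (i + 1))}.Nonempty := by
  refine ⟨_, fun i => if i = 0 then x else y, rfl, ?_, rfl⟩
  simp only [if_neg (show k ≠ 0 by omega)]

lemma chainSet_bddBelow (hsl : UniformlySuperlinear c) (k : ℕ) (x y : X) :
    BddBelow {r : ℝ | ∃ p : ℕ → X, p 0 = x ∧ p k = y ∧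
      r = ∑ i ∈ Finset.range k, c (p i) (p (i + 1))} := by
  obtain ⟨C, hC⟩ := hsl 0 le_rfl
  refine ⟨-((k : ℝ) * C), ?_⟩
  rintro r ⟨p, -, -, rfl⟩
  have h1 : ∀ i ∈ Finset.range k, -C ≤ c (p i) (p (i + 1)) := by
    intro i _
    have := hC (p i) (p (i + 1))
    simp only [zero_mul, zero_sub] at this
    linarith
  calc -((k : ℝ) * C) = ∑ _i ∈ Finset.range k, (-C) := by
        rw [Finset.sum_const, Finset.card_range, nsmul_eq_mul]; ring
    _ ≤ _ := Finset.sum_le_sum h1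

lemma cChain_le_cost (hsl : UniformlySuperlinear c) {k : ℕ} {x y : X} {p : ℕ → X}
    (h0 : p 0 = x) (hk : p k = y) :
    cChain c k x y ≤ chainCost c k p :=
  csInf_le (chainSet_bddBelow hsl k x y) ⟨p, h0, hk, rfl⟩

lemma le_cChain {k : ℕ} (hk : 1 ≤ k) {x y : X} {lb : ℝ}
    (h : ∀ p : ℕ → X, p 0 = x → p k = y → lb ≤ chainCost c k p) :
    lb ≤ cChain c k x y := by
  apply le_csInf (chainSet_nonempty hk x y)
  rintro r ⟨p, h0, hk', rfl⟩
  exact h p h0 hk'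

lemma exists_cost_lt (hsl : UniformlySuperlinear c) {k : ℕ} (hk : 1 ≤ k) (x y : X)
    {ε : ℝ} (hε : 0 < ε) :
    ∃ p : ℕ → X, p 0 = x ∧ p k = y ∧ chainCost c k p < cChain c k x y + ε := by
  have h1 : cChain c k x y < cChain c k x y + ε := lt_add_of_pos_right _ hε
  obtain ⟨r, ⟨p, h0, hk', rfl⟩, hlt⟩ :=
    exists_lt_of_csInf_lt (chainSet_nonempty (c := c) hk x y) h1
  exact ⟨p, h0, hk', hlt⟩

lemma chainCost_append (k : ℕ) (p : ℕ → X) (z : X) :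
    chainCost c (k + 1) (fun i => if i = k + 1 then z else p i)
      = chainCost c k p + c (p k) z := by
  unfold chainCost
  rw [Finset.sum_range_succ]
  congr 1
  · apply Finset.sum_congr rfl
    intro i hi
    rw [Finset.mem_range] at hi
    have h1 : i ≠ k + 1 := by omega
    have h2 : i + 1 ≠ k + 1 := by omega
    simp only [if_neg h1, if_neg h2]
  · simp [(by omega : k ≠ k + 1)]

lemma neg_le_chainCost (hsl : UniformlySuperlinear c) {k : ℕ} (hk : 1 ≤ k)
    {x y : X} {p : ℕ → X} (h0 : p 0 = x) (hky : p k = y) :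
    -(c y x + critValue c) ≤ chainCost c k p + k * critValue c := by
  have hloop : (fun i => if i = k + 1 then x else p i) (k + 1)
      = (fun i => if i = k + 1 then x else p i) 0 := by
    simp only [if_pos rfl, if_neg (by omega : (0:ℕ) ≠ k + 1)]
    exact h0.symm
  have h1 := loop_nonneg hsl (p := fun i => if i = k + 1 then x else p i)
    (k := k + 1) (by omega) hloop
  rw [chainCost_append, hky] at h1
  push_cast at h1
  linarith

lemma phiSet_bddBelow (hsl : UniformlySuperlinear c) {n : ℕ} (hn : 1 ≤ n) (x y : X) :
    -(c y x + critValue c) ∈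
      lowerBounds {r : ℝ | ∃ k : ℕ, n ≤ k ∧ r = cChain c k x y + k * critValue c} := by
  rintro r ⟨k, hk, rfl⟩
  have h1k : 1 ≤ k := hn.trans hk
  have h2 := le_cChain (c := c) h1k (x := x) (y := y)
    (lb := -(c y x + critValue c) - k * critValue c)
    (fun p h0 hkp => by linarith [neg_le_chainCost hsl h1k h0 hkp])
  linarith

lemma phiN_le_cost (hsl : UniformlySuperlinear c) {n k : ℕ} (hn : 1 ≤ n) (hnk : n ≤ k)
    {x y : X} {p : ℕ → X} (h0 : p 0 = x) (hk : p k = y) :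
    phiN c (critValue c) n x y ≤ chainCost c k p + k * critValue c := by
  have h1 : phiN c (critValue c) n x y ≤ cChain c k x y + k * critValue c :=
    csInf_le ⟨_, phiSet_bddBelow hsl hn x y⟩ ⟨k, hnk, rfl⟩
  have h2 := cChain_le_cost hsl h0 hk
  linarith

lemma neg_le_phiN (hsl : UniformlySuperlinear c) {n : ℕ} (hn : 1 ≤ n) (x y : X) :
    -(c y x + critValue c) ≤ phiN c (critValue c) n x y :=
  le_csInf ⟨_, n, le_rfl, rfl⟩ (phiSet_bddBelow hsl hn x y)

lemma exists_phiN_cost (hsl : UniformlySuperlinear c) {n : ℕ} (hn : 1 ≤ n) (x y : X)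
    {ε : ℝ} (hε : 0 < ε) :
    ∃ k : ℕ, n ≤ k ∧ ∃ p : ℕ → X, p 0 = x ∧ p k = y ∧
      chainCost c k p + k * critValue c < phiN c (critValue c) n x y + ε := by
  have h1 : phiN c (critValue c) n x y < phiN c (critValue c) n x y + ε / 2 :=
    lt_add_of_pos_right _ (half_pos hε)
  obtain ⟨r, ⟨k, hk, rfl⟩, hlt⟩ :=
    exists_lt_of_csInf_lt (s := {r : ℝ | ∃ k : ℕ, n ≤ k ∧ r = cChain c k x y + k * critValue c})
      ⟨_, n, le_rfl, rfl⟩ h1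
  obtain ⟨p, h0, hk', hcost⟩ := exists_cost_lt hsl (hn.trans hk) x y (half_pos hε)
  exact ⟨k, hk, p, h0, hk', by linarith⟩

end WeakKAMAux
section WeakKAMMane

open Finset
open scoped Classical
set_option linter.unusedSectionVars false
set_option linter.unusedVariables false

variable {X : Type*} [MetricSpace X] [Nonempty X] {c : X → X → ℝ}

lemma subSol_dominated (hsl : UniformlySuperlinear c) (x : X) :
    Dominated c (critValue c)
      (fun z => if z = x then 0 else phiN c (critValue c) 1 x z) := by
  intro a b
  by_cases hb : b = x
  · subst hb
    by_cases ha : a = b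
    · subst ha
      simp only [if_pos rfl, sub_self]
      have h1 := loop_nonneg hsl (p := fun _ => a) (k := 1) le_rfl rfl
      simp only [chainCost, Finset.sum_range_one, Nat.cast_one, one_mul] at h1
      linarith
    · have h1 := neg_le_phiN hsl le_rfl b a
      beta_reduce
      rw [if_pos rfl, if_neg ha]
      linarith
  · by_cases ha : a = x
    · subst ha
      simp only [if_pos rfl, if_neg hb, sub_zero]
      have h1 := phiN_le_cost hsl le_rfl le_rfl
        (p := fun i => if i = 0 then a else b) (x := a) (y := b) rfl (by simp)
      simp only [chainCost, Finset.sum_range_one, Nat.cast_one, one_mul] at h1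
      simpa using h1
    · simp only [if_neg ha, if_neg hb]
      have key : ∀ ε > 0, phiN c (critValue c) 1 x b
          ≤ (phiN c (critValue c) 1 x a + c a b + critValue c) + ε := by
        intro ε hε
        obtain ⟨k, hk, p, h0, hka, hcost⟩ := exists_phiN_cost hsl le_rfl x a hε
        have hq0 : (fun i => if i = k + 1 then b else p i) 0 = x := by
          simp only [if_neg (show (0:ℕ) ≠ k + 1 by omega)]; exact h0
        have hqk : (fun i => if i = k + 1 then b else p i) (k + 1) = b := by simp
        have h2 := phiN_le_cost hsl le_rfl (show 1 ≤ k + 1 by omega)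
          (p := fun i => if i = k + 1 then b else p i) hq0 hqk
        rw [chainCost_append, hka] at h2
        push_cast at h2
        linarith
      have h3 := le_of_forall_pos_le_add key
      linarith

lemma phiN_eq_mane (hsl : UniformlySuperlinear c) {x y : X} (hxy : x ≠ y) :
    phiN c (critValue c) 1 x y = mane c x y := by
  have hdom := subSol_dominated hsl x
  have hmem : phiN c (critValue c) 1 x y ∈
      {r : ℝ | ∃ u : X → ℝ, Dominated c (critValue c) u ∧ r = u y - u x} := by
    refine ⟨_, hdom, ?_⟩
    simp [Ne.symm hxy]
  have hubd : ∀ r ∈ {r : ℝ | ∃ u : X → ℝ, Dominated c (critValue c) u ∧ r = u y - u x},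
      r ≤ phiN c (critValue c) 1 x y := by
    rintro r ⟨v, hv, rfl⟩
    unfold phiN
    refine le_csInf ⟨cChain c 1 x y + (1 : ℕ) * critValue c, ⟨1, le_rfl, rfl⟩⟩ ?_
    rintro r ⟨k, hk, rfl⟩
    have h1k : (1:ℕ) ≤ k := hk
    have h2 := le_cChain (c := c) h1k (x := x) (y := y)
      (lb := v y - v x - k * critValue c) (fun p h0 hkp => by
        have h3 := dominated_chain hv p k
        rw [h0, hkp] at h3
        linarith)
    linarith
  exact le_antisymm (le_csSup ⟨_, hubd⟩ hmem) (csSup_le ⟨_, hmem⟩ hubd)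

end WeakKAMMane
section WeakKAMGeom

open Finset
open scoped Classical
set_option linter.unusedSectionVars false
set_option linter.unusedVariables false

variable {X : Type*} [MetricSpace X] [Nonempty X] {c : X → X → ℝ} {B K : ℝ}

lemma group_chain (hK : 0 < K) :
    ∀ N : ℕ, ∀ p : ℕ → X, (∀ i < N, dist (p i) (p (i + 1)) ≤ K) →
    ∃ m : ℕ, ∃ q : ℕ → X, q 0 = p 0 ∧ q m = p N ∧
      (∀ i < m, dist (q i) (q (i + 1)) ≤ 2 * K) ∧
      (m : ℝ) * K ≤ (∑ i ∈ Finset.range N, dist (p i) (p (i + 1))) + K := by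
  intro N
  induction N using Nat.strong_induction_on with
  | _ N ih =>
  intro p hp
  have hS0 : 0 ≤ ∑ i ∈ Finset.range N, dist (p i) (p (i + 1)) :=
    Finset.sum_nonneg fun i _ => dist_nonneg
  by_cases hSK : (∑ i ∈ Finset.range N, dist (p i) (p (i + 1))) ≤ K
  · refine ⟨1, fun i => if i = 0 then p 0 else p N, by simp, by simp, ?_, by push_cast; linarith⟩
    intro i hi
    have hi0 : i = 0 := by omega
    subst hi0
    simp only [if_pos rfl, if_neg (show (1:ℕ) ≠ 0 by omega)]
    calc dist (p 0) (p N) ≤ ∑ i ∈ Finset.range N, dist (p i) (p (i + 1)) :=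
          dist_le_range_sum_dist p N
      _ ≤ 2 * K := by linarith
  · push_neg at hSK
    have hex : ∃ j, K < ∑ i ∈ Finset.range j, dist (p i) (p (i + 1)) := ⟨N, hSK⟩
    set j := Nat.find hex with hjdef
    have hjspec : K < ∑ i ∈ Finset.range j, dist (p i) (p (i + 1)) := Nat.find_spec hex
    have hjle : j ≤ N := Nat.find_le hSK
    have hj1 : 1 ≤ j := by
      by_contra h
      have hj0 : j = 0 := by omega
      rw [hj0] at hjspec
      simp at hjspec
      linarith
    have hjprev : ¬ K < ∑ i ∈ Finset.range (j - 1), dist (p i) (p (i + 1)) :=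
      Nat.find_min hex (by omega)
    push_neg at hjprev
    have hstep : dist (p 0) (p j) ≤ 2 * K := by
      have h1 : dist (p 0) (p j) ≤ ∑ i ∈ Finset.range j, dist (p i) (p (i + 1)) :=
        dist_le_range_sum_dist p j
      have hjj : j - 1 + 1 = j := by omega
      have h2 : ∑ i ∈ Finset.range j, dist (p i) (p (i + 1))
          = (∑ i ∈ Finset.range (j - 1), dist (p i) (p (i + 1)))
            + dist (p (j - 1)) (p j) := by
        conv_lhs => rw [← hjj, Finset.sum_range_succ]
        rw [hjj]
      have h3 : dist (p (j - 1)) (p j) ≤ K := by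
        have h4 := hp (j - 1) (by omega)
        rwa [hjj] at h4
      linarith
    have htail : ∀ i < N - j, dist (p (j + i)) (p (j + i + 1)) ≤ K :=
      fun i hi => hp (j + i) (by omega)
    obtain ⟨m', q', hq0, hqm, hqstep, hqbound⟩ := ih (N - j) (by omega) (fun i => p (j + i)) htail
    have hsplit : ∑ i ∈ Finset.range N, dist (p i) (p (i + 1))
        = (∑ i ∈ Finset.range j, dist (p i) (p (i + 1)))
          + ∑ i ∈ Finset.range (N - j), dist (p (j + i)) (p (j + i + 1)) := by
      conv_lhs => rw [show N = j + (N - j) by omega, sum_range_split]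
    refine ⟨m' + 1, fun i => if i = 0 then p 0 else q' (i - 1), by simp, ?_, ?_, ?_⟩
    · simp only [if_neg (show m' + 1 ≠ 0 by omega)]
      rw [show m' + 1 - 1 = m' from rfl, hqm, show j + (N - j) = N by omega]
    · intro i hi
      by_cases hi0 : i = 0
      · subst hi0
        simp only [if_pos rfl, if_neg (show (1:ℕ) ≠ 0 by omega)]
        have : q' (1 - 1) = p j := by simpa using hq0
        rw [this]
        exact hstep
      · simp only [if_neg hi0, if_neg (show i + 1 ≠ 0 by omega)]
        have h5 := hqstep (i - 1) (by omega)
        rwa [show i + 1 - 1 = (i - 1) + 1 by omega]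
    · simp only [← Nat.add_assoc] at hqbound
      push_cast
      linarith [hqbound, hjspec, hsplit.ge, hsplit.le]

lemma shortcut_exists (hB : 1 ≤ B) (hK : 0 < K) (hlen : IsBLengthSpaceAtScale X B K)
    (hsl : UniformlySuperlinear c) (hub : UniformlyBounded c) :
    ∃ R₀ : ℝ, 2 * K ≤ R₀ ∧ ∀ a b : X, R₀ < dist a b →
      ∃ (m : ℕ) (q : ℕ → X), 1 ≤ m ∧ q 0 = a ∧ q m = b ∧
        (∀ i < m, dist (q i) (q (i + 1)) ≤ 2 * K) ∧
        chainCost c m q + m * critValue c ≤ c a b + critValue c := by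
  obtain ⟨A, hA⟩ := hub (2 * K)
  set α := critValue c with hα
  set M := max (A + α) 0 with hM
  have hM0 : 0 ≤ M := le_max_right _ _
  have hB0 : (0:ℝ) < B := lt_of_lt_of_le one_pos hB
  have hMBK : 0 ≤ M * B / K := div_nonneg (mul_nonneg hM0 hB0.le) hK.le
  obtain ⟨C, hC⟩ := hsl (M * B / K + 1) (by linarith)
  refine ⟨max (M + C - α) (2 * K), le_max_right _ _, ?_⟩
  intro a b hab
  obtain ⟨N, p, hp0, hpN, hpstep, hpsum⟩ := hlen a b
  obtain ⟨m, q, hq0, hqm, hqstep, hqbound⟩ := group_chain hK N p hpstep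
  rw [hp0] at hq0
  rw [hpN] at hqm
  have hm1 : 1 ≤ m := by
    by_contra h
    have hm0 : m = 0 := by omega
    have hab' : a = b := by rw [← hq0, ← hqm, hm0]
    have h2K : 2 * K ≤ max (M + C - α) (2 * K) := le_max_right _ _
    rw [hab', dist_self] at hab
    linarith
  refine ⟨m, q, hm1, hq0, hqm, hqstep, ?_⟩
  have hcost : chainCost c m q ≤ (m : ℝ) * A := by
    calc chainCost c m q ≤ ∑ i ∈ Finset.range m, A :=
          Finset.sum_le_sum fun i hi => hA _ _ (hqstep i (Finset.mem_range.mp hi))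
      _ = (m : ℝ) * A := by rw [Finset.sum_const, Finset.card_range, nsmul_eq_mul]
  have h2 : chainCost c m q + (m : ℝ) * α ≤ (m : ℝ) * M := by
    have h2a : (m : ℝ) * (A + α) ≤ (m : ℝ) * M :=
      mul_le_mul_of_nonneg_left (le_max_left _ _) (Nat.cast_nonneg m)
    have h2b : (m : ℝ) * (A + α) = (m : ℝ) * A + (m : ℝ) * α := by ring
    linarith
  have h3 : (m : ℝ) * K ≤ B * dist a b + K := by linarith [hqbound, hpsum]
  have h4 : (m : ℝ) * M ≤ (B * dist a b + K) / K * M := by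
    apply mul_le_mul_of_nonneg_right _ hM0
    rw [le_div_iff₀ hK]
    exact h3
  have h5 : (B * dist a b + K) / K * M = M * B / K * dist a b + M := by
    field_simp
  have h6 : (M * B / K + 1) * dist a b - C ≤ c a b := hC a b
  have h7 : M + C - α ≤ dist a b := le_trans (le_max_left _ _) hab.le
  have h8 : (M * B / K + 1) * dist a b = M * B / K * dist a b + dist a b := by ring
  linarith

variable {R₀ : ℝ}

/-- Shortcut property abbreviation. -/
def ShortcutProp (c : X → X → ℝ) (K R₀ : ℝ) : Prop :=
  ∀ a b : X, R₀ < dist a b →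
    ∃ (m : ℕ) (q : ℕ → X), 1 ≤ m ∧ q 0 = a ∧ q m = b ∧
      (∀ i < m, dist (q i) (q (i + 1)) ≤ 2 * K) ∧
      chainCost c m q + m * critValue c ≤ c a b + critValue c

lemma chain_front (h2K : 2 * K ≤ R₀) (hR : ShortcutProp c K R₀)
    {k : ℕ} (hk : 1 ≤ k) {x y : X} {p : ℕ → X} (h0 : p 0 = x) (hky : p k = y) :
    ∃ k' : ℕ, k ≤ k' ∧ ∃ r : ℕ → X, r 0 = x ∧ r k' = y ∧ dist x (r 1) ≤ R₀ ∧
      chainCost c k' r + k' * critValue c ≤ chainCost c k p + k * critValue c := by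
  by_cases hfar : dist x (p 1) ≤ R₀
  · exact ⟨k, le_rfl, p, h0, hky, hfar, le_rfl⟩
  · push_neg at hfar
    obtain ⟨m, q, hm1, hq0, hqm, hqstep, hqcost⟩ := hR x (p 1) hfar
    set r : ℕ → X := fun i => if i < m then q i else p (i - m + 1) with hrdef
    have hrq : ∀ i ≤ m, r i = q i := by
      intro i hi
      rcases lt_or_eq_of_le hi with h | h
      · simp only [hrdef, if_pos h]
      · subst h
        simp [hrdef, hqm]
    have hrp : ∀ i, r (m + i) = p (i + 1) := by
      intro i
      simp only [hrdef, if_neg (show ¬ m + i < m by omega)]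
      rw [show m + i - m + 1 = i + 1 by omega]
    refine ⟨m + (k - 1), by omega, r, ?_, ?_, ?_, ?_⟩
    · rw [hrq 0 (by omega), hq0]
    · have := hrp (k - 1)
      rwa [show k - 1 + 1 = k by omega, hky] at this
    · have hr1 : r 1 = q 1 := hrq 1 hm1
      rw [hr1, ← hq0]
      exact le_trans (hqstep 0 hm1) h2K
    · have hsum : chainCost c (m + (k - 1)) r
          = chainCost c m q + (chainCost c k p - c x (p 1)) := by
        unfold chainCost
        rw [sum_range_split]
        have hfirst : ∑ i ∈ Finset.range m, c (r i) (r (i + 1))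
            = ∑ i ∈ Finset.range m, c (q i) (q (i + 1)) := by
          apply Finset.sum_congr rfl
          intro i hi
          rw [Finset.mem_range] at hi
          rw [hrq i (by omega), hrq (i + 1) (by omega)]
        have hsecond : ∑ i ∈ Finset.range (k - 1), c (r (m + i)) (r (m + i + 1))
            = ∑ i ∈ Finset.range (k - 1), c (p (i + 1)) (p (i + 1 + 1)) := by
          apply Finset.sum_congr rfl
          intro i hi
          rw [hrp i, show m + i + 1 = m + (i + 1) from rfl, hrp (i + 1)]
        rw [hfirst, hsecond]
        have hk' : k = (k - 1) + 1 := by omega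
        have hexp : ∑ i ∈ Finset.range k, c (p i) (p (i + 1))
            = (∑ i ∈ Finset.range (k - 1), c (p (i + 1)) (p (i + 1 + 1))) + c (p 0) (p 1) := by
          conv_lhs => rw [hk', Finset.sum_range_succ']
        rw [hexp, h0]
        ring
      rw [hsum]
      rw [Nat.cast_add, Nat.cast_sub hk, Nat.cast_one]
      linarith [hqcost]

lemma chain_back (h2K : 2 * K ≤ R₀) (hR : ShortcutProp c K R₀)
    {k : ℕ} (hk : 1 ≤ k) {x y : X} {p : ℕ → X} (h0 : p 0 = x) (hky : p k = y) :
    ∃ k' : ℕ, k ≤ k' ∧ ∃ r : ℕ → X, r 0 = x ∧ r k' = y ∧ dist (r (k' - 1)) y ≤ R₀ ∧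
      chainCost c k' r + k' * critValue c ≤ chainCost c k p + k * critValue c := by
  by_cases hfar : dist (p (k - 1)) y ≤ R₀
  · exact ⟨k, le_rfl, p, h0, hky, hfar, le_rfl⟩
  · push_neg at hfar
    obtain ⟨m, q, hm1, hq0, hqm, hqstep, hqcost⟩ := hR (p (k - 1)) y hfar
    set r : ℕ → X := fun i => if i < k - 1 then p i else q (i - (k - 1)) with hrdef
    have hrp : ∀ i ≤ k - 1, r i = p i := by
      intro i hi
      rcases lt_or_eq_of_le hi with h | h
      · simp only [hrdef, if_pos h]
      · subst h
        simp [hrdef, hq0]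
    have hrq : ∀ i, r ((k - 1) + i) = q i := by
      intro i
      simp only [hrdef, if_neg (show ¬ (k - 1) + i < k - 1 by omega)]
      rw [show (k - 1) + i - (k - 1) = i by omega]
    refine ⟨(k - 1) + m, by omega, r, ?_, ?_, ?_, ?_⟩
    · rw [hrp 0 (by omega), h0]
    · rw [hrq m, hqm]
    · have h1 : (k - 1) + m - 1 = (k - 1) + (m - 1) := by omega
      rw [h1, hrq (m - 1)]
      have h2 := hqstep (m - 1) (by omega)
      rw [show m - 1 + 1 = m by omega, hqm] at h2
      exact le_trans h2 h2K
    · have hsum : chainCost c ((k - 1) + m) r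
          = (chainCost c k p - c (p (k - 1)) y) + chainCost c m q := by
        unfold chainCost
        rw [sum_range_split]
        have hfirst : ∑ i ∈ Finset.range (k - 1), c (r i) (r (i + 1))
            = ∑ i ∈ Finset.range (k - 1), c (p i) (p (i + 1)) := by
          apply Finset.sum_congr rfl
          intro i hi
          rw [Finset.mem_range] at hi
          rw [hrp i (by omega), hrp (i + 1) (by omega)]
        have hsecond : ∑ i ∈ Finset.range m, c (r ((k - 1) + i)) (r ((k - 1) + i + 1))
            = ∑ i ∈ Finset.range m, c (q i) (q (i + 1)) := by
          apply Finset.sum_congr rfl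
          intro i hi
          rw [show (k - 1) + i + 1 = (k - 1) + (i + 1) from rfl, hrq i, hrq (i + 1)]
        rw [hfirst, hsecond]
        have hexp : ∑ i ∈ Finset.range k, c (p i) (p (i + 1))
            = (∑ i ∈ Finset.range (k - 1), c (p i) (p (i + 1)))
              + c (p (k - 1)) (p k) := by
          conv_lhs => rw [show k = (k - 1) + 1 by omega, Finset.sum_range_succ]
          rw [show k - 1 + 1 = k by omega]
        rw [hexp, hky]
        ring
      rw [hsum]
      rw [Nat.cast_add, Nat.cast_sub hk, Nat.cast_one]
      linarith [hqcost]

end WeakKAMGeom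
section WeakKAMFinal

open Finset Metric
open scoped Classical
set_option linter.unusedSectionVars false
set_option linter.unusedVariables false

variable {X : Type*} [MetricSpace X] [Nonempty X] [ProperSpace X]
  {c : X → X → ℝ} {K R₀ : ℝ}

lemma efront (hcont : Continuous fun q : X × X => c q.1 q.2)
    (hsl : UniformlySuperlinear c) (hK : 0 < K) (h2K : 2 * K ≤ R₀)
    (hR : ShortcutProp c K R₀) (x₀ : X) {ε : ℝ} (hε : 0 < ε) :
    ∃ δ > 0, δ ≤ 1 ∧ ∀ x ∈ closedBall x₀ δ, ∀ x' ∈ closedBall x₀ δ, ∀ n : ℕ, 1 ≤ n → ∀ y : X,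
      phiN c (critValue c) n x y ≤ phiN c (critValue c) n x' y + ε := by
  have hR₀0 : 0 < R₀ := by linarith
  have hcomp : IsCompact (closedBall x₀ 1 ×ˢ closedBall x₀ (R₀ + 1)) :=
    (isCompact_closedBall _ _).prod (isCompact_closedBall _ _)
  have huc := hcomp.uniformContinuousOn_of_continuous hcont.continuousOn
  rw [Metric.uniformContinuousOn_iff] at huc
  obtain ⟨δ', hδ'0, hδ'⟩ := huc (ε / 2) (half_pos hε)
  refine ⟨min (δ' / 3) 1, by positivity, min_le_right _ _, ?_⟩
  intro x hx x' hx' n hn y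
  obtain ⟨k, hk, p, hp0, hpk, hpcost⟩ := exists_phiN_cost hsl hn x' y (half_pos hε)
  obtain ⟨k', hkk', r, hr0, hrk, hr1, hrcost⟩ := chain_front h2K hR (hn.trans hk) hp0 hpk
  have hnk' : n ≤ k' := hk.trans hkk'
  have hk'1 : 1 ≤ k' := hn.trans hnk'
  set s : ℕ → X := fun i => if i = 0 then x else r i with hsdef
  have hs0 : s 0 = x := by simp [hsdef]
  have hsk : s k' = y := by
    simp only [hsdef, if_neg (show k' ≠ 0 by omega)]
    exact hrk
  have hsr : ∀ i, s (i + 1) = r (i + 1) := fun i => by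
    simp [hsdef]
  have hexp : ∀ t : ℕ → X, ∑ i ∈ Finset.range k', c (t i) (t (i + 1))
      = (∑ i ∈ Finset.range (k' - 1), c (t (i + 1)) (t (i + 1 + 1))) + c (t 0) (t 1) := by
    intro t
    conv_lhs => rw [show k' = (k' - 1) + 1 by omega, Finset.sum_range_succ']
  have hcost : chainCost c k' s = chainCost c k' r - c x' (r 1) + c x (r 1) := by
    unfold chainCost
    rw [hexp s, hexp r]
    have h1 : ∑ i ∈ Finset.range (k' - 1), c (s (i + 1)) (s (i + 1 + 1))
        = ∑ i ∈ Finset.range (k' - 1), c (r (i + 1)) (r (i + 1 + 1)) := by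
      apply Finset.sum_congr rfl
      intro i _
      rw [hsr i, hsr (i + 1)]
    have hs1 : s 1 = r 1 := hsr 0
    rw [h1, hs0, hs1, hr0]
    ring
  -- uniform continuity estimate
  have hxx₀ : dist x x₀ ≤ min (δ' / 3) 1 := hx
  have hx'x₀ : dist x' x₀ ≤ min (δ' / 3) 1 := hx'
  have hmem1 : (x, r 1) ∈ closedBall x₀ 1 ×ˢ closedBall x₀ (R₀ + 1) := by
    constructor
    · exact mem_closedBall.mpr (le_trans hx (min_le_right _ _))
    · have : dist (r 1) x' ≤ R₀ := by rw [dist_comm]; exact hr1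
      have h2 : dist (r 1) x₀ ≤ dist (r 1) x' + dist x' x₀ := dist_triangle _ _ _
      have h3 : dist x' x₀ ≤ 1 := le_trans hx' (min_le_right _ _)
      exact mem_closedBall.mpr (by linarith)
  have hmem2 : (x', r 1) ∈ closedBall x₀ 1 ×ˢ closedBall x₀ (R₀ + 1) := by
    constructor
    · exact mem_closedBall.mpr (le_trans hx' (min_le_right _ _))
    · have : dist (r 1) x' ≤ R₀ := by rw [dist_comm]; exact hr1
      have h2 : dist (r 1) x₀ ≤ dist (r 1) x' + dist x' x₀ := dist_triangle _ _ _
      have h3 : dist x' x₀ ≤ 1 := le_trans hx' (min_le_right _ _)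
      exact mem_closedBall.mpr (by linarith)
  have hdistlt : dist ((x, r 1) : X × X) (x', r 1) < δ' := by
    rw [Prod.dist_eq]
    have h1 : dist x x' ≤ dist x x₀ + dist x₀ x' := dist_triangle _ _ _
    have h2 : dist x₀ x' = dist x' x₀ := dist_comm _ _
    have h3 : min (δ' / 3) 1 ≤ δ' / 3 := min_le_left _ _
    have h4 : dist (r 1) (r 1) = 0 := dist_self _
    rw [h4]
    have h5 : max (dist x x') 0 = dist x x' := max_eq_left dist_nonneg
    rw [h5]
    linarith
  have hcc := hδ' _ hmem1 _ hmem2 hdistlt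
  simp only [Real.dist_eq] at hcc
  have hcc2 : c x (r 1) ≤ c x' (r 1) + ε / 2 := by
    have := abs_lt.mp hcc
    linarith [this.2]
  have hfinal := phiN_le_cost hsl hn hnk' (p := s) hs0 hsk
  rw [hcost] at hfinal
  linarith

lemma eback (hcont : Continuous fun q : X × X => c q.1 q.2)
    (hsl : UniformlySuperlinear c) (hK : 0 < K) (h2K : 2 * K ≤ R₀)
    (hR : ShortcutProp c K R₀) (y₀ : X) {ε : ℝ} (hε : 0 < ε) :
    ∃ δ > 0, δ ≤ 1 ∧ ∀ y ∈ closedBall y₀ δ, ∀ y' ∈ closedBall y₀ δ, ∀ n : ℕ, 1 ≤ n → ∀ x : X,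
      phiN c (critValue c) n x y ≤ phiN c (critValue c) n x y' + ε := by
  have hR₀0 : 0 < R₀ := by linarith
  have hcomp : IsCompact (closedBall y₀ (R₀ + 1) ×ˢ closedBall y₀ 1) :=
    (isCompact_closedBall _ _).prod (isCompact_closedBall _ _)
  have huc := hcomp.uniformContinuousOn_of_continuous hcont.continuousOn
  rw [Metric.uniformContinuousOn_iff] at huc
  obtain ⟨δ', hδ'0, hδ'⟩ := huc (ε / 2) (half_pos hε)
  refine ⟨min (δ' / 3) 1, by positivity, min_le_right _ _, ?_⟩
  intro y hy y' hy' n hn x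
  obtain ⟨k, hk, p, hp0, hpk, hpcost⟩ := exists_phiN_cost hsl hn x y' (half_pos hε)
  obtain ⟨k', hkk', r, hr0, hrk, hrlast, hrcost⟩ := chain_back h2K hR (hn.trans hk) hp0 hpk
  have hnk' : n ≤ k' := hk.trans hkk'
  have hk'1 : 1 ≤ k' := hn.trans hnk'
  set s : ℕ → X := fun i => if i = k' then y else r i with hsdef
  have hs0 : s 0 = x := by
    simp only [hsdef, if_neg (show 0 ≠ k' by omega)]
    exact hr0
  have hsk : s k' = y := by simp [hsdef]
  have hsr : ∀ i < k', s i = r i := fun i hi => by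
    simp only [hsdef, if_neg (show i ≠ k' by omega)]
  have hcost : chainCost c k' s = chainCost c k' r - c (r (k' - 1)) y' + c (r (k' - 1)) y := by
    unfold chainCost
    have hexp : ∀ t : ℕ → X, ∑ i ∈ Finset.range k', c (t i) (t (i + 1))
        = (∑ i ∈ Finset.range (k' - 1), c (t i) (t (i + 1))) + c (t (k' - 1)) (t k') := by
      intro t
      conv_lhs => rw [show k' = (k' - 1) + 1 by omega, Finset.sum_range_succ]
      rw [show k' - 1 + 1 = k' by omega]
    rw [hexp s, hexp r]
    have h1 : ∑ i ∈ Finset.range (k' - 1), c (s i) (s (i + 1))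
        = ∑ i ∈ Finset.range (k' - 1), c (r i) (r (i + 1)) := by
      apply Finset.sum_congr rfl
      intro i hi
      rw [Finset.mem_range] at hi
      rw [hsr i (by omega), hsr (i + 1) (by omega)]
    have h2 : s (k' - 1) = r (k' - 1) := hsr _ (by omega)
    rw [h1, h2, hsk, hrk]
    ring
  have hw : dist (r (k' - 1)) y₀ ≤ R₀ + 1 := by
    have h1 : dist (r (k' - 1)) y' ≤ R₀ := hrlast
    have h2 : dist (r (k' - 1)) y₀ ≤ dist (r (k' - 1)) y' + dist y' y₀ := dist_triangle _ _ _
    have h3 : dist y' y₀ ≤ 1 := le_trans hy' (min_le_right _ _)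
    linarith
  have hmem1 : ((r (k' - 1), y) : X × X) ∈ closedBall y₀ (R₀ + 1) ×ˢ closedBall y₀ 1 :=
    ⟨mem_closedBall.mpr hw, mem_closedBall.mpr (le_trans hy (min_le_right _ _))⟩
  have hmem2 : ((r (k' - 1), y') : X × X) ∈ closedBall y₀ (R₀ + 1) ×ˢ closedBall y₀ 1 :=
    ⟨mem_closedBall.mpr hw, mem_closedBall.mpr (le_trans hy' (min_le_right _ _))⟩
  have hdistlt : dist ((r (k' - 1), y) : X × X) (r (k' - 1), y') < δ' := by
    rw [Prod.dist_eq]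
    have h1 : dist y y' ≤ dist y y₀ + dist y₀ y' := dist_triangle _ _ _
    have h2 : dist y₀ y' = dist y' y₀ := dist_comm _ _
    have h3 : min (δ' / 3) 1 ≤ δ' / 3 := min_le_left _ _
    rw [dist_self]
    have h5 : max 0 (dist y y') = dist y y' := max_eq_right dist_nonneg
    rw [h5]
    have hy2 : dist y y₀ ≤ min (δ' / 3) 1 := hy
    have hy'2 : dist y' y₀ ≤ min (δ' / 3) 1 := hy'
    linarith
  have hcc := hδ' _ hmem1 _ hmem2 hdistlt
  simp only [Real.dist_eq] at hcc
  have hcc2 : c (r (k' - 1)) y ≤ c (r (k' - 1)) y' + ε / 2 := by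
    have := abs_lt.mp hcc
    linarith [this.2]
  have hfinal := phiN_le_cost hsl hn hnk' (p := s) hs0 hsk
  rw [hcost] at hfinal
  linarith

end WeakKAMFinal
theorem phiN_locally_equicontinuous {X : Type*} [MetricSpace X] [Nonempty X] [ProperSpace X]
    {B K : ℝ} (hB : 1 ≤ B) (hK : 0 < K) (hlen : IsBLengthSpaceAtScale X B K)
    {c : X → X → ℝ} (hcont : Continuous fun q : X × X => c q.1 q.2)
    (hsl : UniformlySuperlinear c) (hub : UniformlyBounded c) :
    Equicontinuous (fun n : {n : ℕ // 1 ≤ n} =>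
      fun q : X × X => phiN c (critValue c) n.1 q.1 q.2) ∧
    Continuous (fun q : X × X => phiN c (critValue c) 1 q.1 q.2) ∧
    (∀ x y : X, x ≠ y → phiN c (critValue c) 1 x y = mane c x y) := by
  obtain ⟨R₀, h2K, hR⟩ := shortcut_exists hB hK hlen hsl hub
  have hEq : Equicontinuous (fun n : {n : ℕ // 1 ≤ n} =>
      fun q : X × X => phiN c (critValue c) n.1 q.1 q.2) := by
    intro q₀
    obtain ⟨x₀, y₀⟩ := q₀
    rw [Metric.equicontinuousAt_iff]
    intro ε hε
    have hε4 : 0 < ε / 4 := by linarith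
    obtain ⟨δ₁, hδ₁0, hδ₁1, hE1⟩ := efront hcont hsl hK h2K hR x₀ hε4
    obtain ⟨δ₂, hδ₂0, hδ₂1, hE2⟩ := eback hcont hsl hK h2K hR y₀ hε4
    refine ⟨min δ₁ δ₂, by positivity, ?_⟩
    rintro ⟨x, y⟩ hq ⟨n, hn⟩
    have hqx : dist x x₀ < min δ₁ δ₂ := by
      have := le_max_left (dist x x₀) (dist y y₀)
      rw [Prod.dist_eq] at hq
      exact lt_of_le_of_lt this hq
    have hqy : dist y y₀ < min δ₁ δ₂ := by
      have := le_max_right (dist x x₀) (dist y y₀)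
      rw [Prod.dist_eq] at hq
      exact lt_of_le_of_lt this hq
    have hx1 : x ∈ Metric.closedBall x₀ δ₁ :=
      Metric.mem_closedBall.mpr (le_trans hqx.le (min_le_left _ _))
    have hx0 : x₀ ∈ Metric.closedBall x₀ δ₁ :=
      Metric.mem_closedBall.mpr (by rw [dist_self]; linarith)
    have hy1 : y ∈ Metric.closedBall y₀ δ₂ :=
      Metric.mem_closedBall.mpr (le_trans hqy.le (min_le_right _ _))
    have hy0 : y₀ ∈ Metric.closedBall y₀ δ₂ :=
      Metric.mem_closedBall.mpr (by rw [dist_self]; linarith)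
    have a1 : phiN c (critValue c) n x y ≤ phiN c (critValue c) n x₀ y + ε / 4 :=
      hE1 x hx1 x₀ hx0 n hn y
    have a2 : phiN c (critValue c) n x₀ y ≤ phiN c (critValue c) n x y + ε / 4 :=
      hE1 x₀ hx0 x hx1 n hn y
    have b1 : phiN c (critValue c) n x₀ y ≤ phiN c (critValue c) n x₀ y₀ + ε / 4 :=
      hE2 y hy1 y₀ hy0 n hn x₀
    have b2 : phiN c (critValue c) n x₀ y₀ ≤ phiN c (critValue c) n x₀ y + ε / 4 :=
      hE2 y₀ hy0 y hy1 n hn x₀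
    rw [Real.dist_eq, abs_sub_lt_iff]
    constructor <;> simp only <;> linarith
  refine ⟨hEq, ?_, fun x y hxy => phiN_eq_mane hsl hxy⟩
  exact hEq.continuous ⟨1, le_rfl⟩
end

section
/- For every critical sub-solution u, all n,m ∈ ℕ and all x,y ∈ X, the Peierls barrier satisfies h(x,y) ≥ (T⁻)ⁿu(y) − (T⁺)ᵐu(x) + (n+m)·α[0]. -/
open Metric Set Filter Topology

section Aux

variable {X : Type*} [Nonempty X] {c : X → X → ℝ} {α : ℝ} {u : X → ℝ}

lemma Tm_le (hu : Dominated c α u) (x z : X) : Tm c u x ≤ u z + c z x :=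
  ciInf_le ⟨u x - α, by rintro r ⟨w, rfl⟩; have := hu w x; dsimp; linarith⟩ z

lemma le_Tm (hu : Dominated c α u) (x : X) : u x - α ≤ Tm c u x :=
  le_ciInf fun z => by have := hu z x; linarith

lemma Tp_le (hu : Dominated c α u) (x : X) : Tp c u x ≤ u x + α :=
  ciSup_le fun z => by have := hu x z; linarith

lemma le_Tp (hu : Dominated c α u) (x z : X) : u z - c x z ≤ Tp c u x :=
  le_ciSup ⟨u x + α, by rintro r ⟨w, rfl⟩; have := hu x w; show u w - c x w ≤ u x + α; linarith⟩ z

lemma dom_Tm (hu : Dominated c α u) : Dominated c α (Tm c u) := fun a b => by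
  have h1 := Tm_le hu b a
  have h2 := le_Tm hu a
  linarith

lemma dom_Tp (hu : Dominated c α u) : Dominated c α (Tp c u) := fun a b => by
  have h1 := Tp_le hu b
  have h2 := le_Tp hu a b
  linarith

lemma dom_Tm_iter (hu : Dominated c α u) (n : ℕ) : Dominated c α ((Tm c)^[n] u) := by
  induction n with
  | zero => exact hu
  | succ k ih => rw [Function.iterate_succ_apply']; exact dom_Tm ih

lemma dom_Tp_iter (hu : Dominated c α u) (m : ℕ) : Dominated c α ((Tp c)^[m] u) := by
  induction m with
  | zero => exact hu
  | succ k ih => rw [Function.iterate_succ_apply']; exact dom_Tp ih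

lemma Tm_iter_le (hu : Dominated c α u) (n : ℕ) (p : ℕ → X) :
    (Tm c)^[n] u (p n) ≤ u (p 0) + ∑ i ∈ Finset.range n, c (p i) (p (i + 1)) := by
  induction n with
  | zero => simp
  | succ k ih =>
      rw [Function.iterate_succ_apply', Finset.sum_range_succ]
      have h1 := Tm_le (dom_Tm_iter hu k) (p (k + 1)) (p k)
      linarith

lemma le_Tp_iter (hu : Dominated c α u) :
    ∀ (m : ℕ) (p : ℕ → X),
      u (p m) - ∑ i ∈ Finset.range m, c (p i) (p (i + 1)) ≤ (Tp c)^[m] u (p 0) := by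
  intro m
  induction m with
  | zero => simp
  | succ k ih =>
      intro p
      rw [Function.iterate_succ_apply']
      have h1 := le_Tp (dom_Tp_iter hu k) (p 0) (p 1)
      have h2 := ih (fun i => p (i + 1))
      rw [Finset.sum_range_succ'] -- ∑_{i<k+1} f i = ∑_{i<k} f (i+1) + f 0
      dsimp at h2 ⊢
      linarith

lemma dom_chain (hu : Dominated c α u) (p : ℕ → X) :
    ∀ a b : ℕ, a ≤ b →
      u (p b) - u (p a) ≤ (∑ i ∈ Finset.Ico a b, c (p i) (p (i + 1))) + ((b - a : ℕ) : ℝ) * α := by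
  intro a b hab
  induction b, hab using Nat.le_induction with
  | base => simp
  | succ b hab ih =>
      rw [Finset.sum_Ico_succ_top hab]
      have := hu (p b) (p (b + 1))
      have hcast : ((b + 1 - a : ℕ) : ℝ) = ((b - a : ℕ) : ℝ) + 1 := by
        rw [show b + 1 - a = (b - a) + 1 by omega]; push_cast; ring
      rw [hcast]
      linarith

end Aux

theorem peierls_ge_iterates {X : Type*} [MetricSpace X] [Nonempty X] [ProperSpace X]
    {B K : ℝ} (hB : 1 ≤ B) (hK : 0 < K) (hlen : IsBLengthSpaceAtScale X B K)
    {c : X → X → ℝ} (hcont : Continuous fun q : X × X => c q.1 q.2)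
    (hsl : UniformlySuperlinear c) (hub : UniformlyBounded c)
    {u : X → ℝ} (hu : Dominated c (critValue c) u) (n m : ℕ) (x y : X) :
    (((Tm c)^[n] u y - (Tp c)^[m] u x + (n + m) * critValue c : ℝ) : EReal) ≤
      peierls c (critValue c) x y := by
  set α := critValue c with hα
  set L : ℝ := (Tm c)^[n] u y - (Tp c)^[m] u x + (n + m) * α with hL
  refine Filter.le_liminf_of_le (by isBoundedDefault) ?_
  filter_upwards [Filter.eventually_ge_atTop (n + m + 1)] with k hk
  rw [EReal.coe_le_coe_iff]
  -- Show L ≤ cChain c k x y + k * α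
  have hknm : n + m ≤ k := by omega
  have hne : {r : ℝ | ∃ p : ℕ → X, p 0 = x ∧ p k = y ∧
      r = ∑ i ∈ Finset.range k, c (p i) (p (i + 1))}.Nonempty := by
    refine ⟨_, fun i => if i = 0 then x else y, by simp, by simp [show k ≠ 0 by omega], rfl⟩
  have hlb : ∀ r ∈ {r : ℝ | ∃ p : ℕ → X, p 0 = x ∧ p k = y ∧
      r = ∑ i ∈ Finset.range k, c (p i) (p (i + 1))}, L - k * α ≤ r := by
    rintro r ⟨p, hp0, hpk, rfl⟩
    -- three pieces
    have h1 : u (p m) - ∑ i ∈ Finset.range m, c (p i) (p (i + 1)) ≤ (Tp c)^[m] u x := by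
      have := le_Tp_iter hu m p; rwa [hp0] at this
    have h2 := dom_chain hu p m (k - n) (by omega)
    have h3 : (Tm c)^[n] u y ≤ u (p (k - n)) +
        ∑ i ∈ Finset.range n, c (p (k - n + i)) (p (k - n + i + 1)) := by
      have := Tm_iter_le hu n (fun i => p (k - n + i))
      simpa [show k - n + n = k by omega, hpk, add_assoc] using this
    have hsum3 : ∑ i ∈ Finset.Ico (k - n) k, c (p i) (p (i + 1)) =
        ∑ i ∈ Finset.range n, c (p (k - n + i)) (p (k - n + i + 1)) := by
      rw [Finset.sum_Ico_eq_sum_range]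
      simp [show k - (k - n) = n by omega, add_assoc]
    have hsplit : ∑ i ∈ Finset.range k, c (p i) (p (i + 1)) =
        (∑ i ∈ Finset.range m, c (p i) (p (i + 1))) +
        (∑ i ∈ Finset.Ico m (k - n), c (p i) (p (i + 1))) +
        (∑ i ∈ Finset.Ico (k - n) k, c (p i) (p (i + 1))) := by
      rw [Finset.range_eq_Ico, ← Finset.sum_Ico_consecutive _ (Nat.zero_le m) (by omega : m ≤ k),
        ← Finset.sum_Ico_consecutive _ (by omega : m ≤ k - n) (by omega : k - n ≤ k),
        ← Finset.range_eq_Ico]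
      ring
    have hcast : ((k - n - m : ℕ) : ℝ) = (k : ℝ) - n - m := by
      rw [show k - n - m = k - (n + m) by omega, Nat.cast_sub hknm]; push_cast; ring
    rw [hsplit, hL]
    rw [hcast] at h2
    rw [hsum3]
    push_cast
    linarith
  have : L - k * α ≤ cChain c k x y := le_csInf hne hlb
  linarith
end

section
/- The projected Aubry set coincides with the zero set of the Peierls barrier on the diagonal: A = {x ∈ X : h(x,x) = 0}. -/
open Metric Set Filter Topology

set_option linter.unusedSectionVars false
set_option linter.unusedVariables false

namespace AubryWork

variable {X : Type*} [MetricSpace X] [Nonempty X] {c : X → X → ℝ}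

/-! ### Basic facts about dominated functions and the critical value -/

theorem exists_lb (hsl : UniformlySuperlinear c) : ∃ C0 : ℝ, ∀ x y : X, -C0 ≤ c x y := by
  obtain ⟨C, hC⟩ := hsl 0 le_rfl
  exact ⟨C, fun x y => by have := hC x y; linarith⟩

theorem domSet_nonempty (hsl : UniformlySuperlinear c) :
    {α : ℝ | ∃ u : X → ℝ, Dominated c α u}.Nonempty := by
  obtain ⟨C0, hC0⟩ := exists_lb hsl
  exact ⟨C0, fun _ => 0, fun x y => by have := hC0 x y; simp; linarith⟩

theorem domSet_bddBelow : BddBelow {α : ℝ | ∃ u : X → ℝ, Dominated c α u} := by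
  obtain ⟨x⟩ := ‹Nonempty X›
  refine ⟨-c x x, fun a ha => ?_⟩
  obtain ⟨u, hu⟩ := ha
  have := hu x x
  linarith

theorem critValue_le {α : ℝ} {u : X → ℝ} (hu : Dominated c α u) : critValue c ≤ α :=
  csInf_le domSet_bddBelow ⟨u, hu⟩

theorem exists_dom_lt (hsl : UniformlySuperlinear c) {ε : ℝ} (hε : 0 < ε) :
    ∃ (a : ℝ) (u : X → ℝ), Dominated c a u ∧ a < critValue c + ε := by
  obtain ⟨a, ⟨u, hu⟩, hlt⟩ := Real.lt_sInf_add_pos (domSet_nonempty hsl) hε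
  exact ⟨a, u, hu, hlt⟩

/-- Telescoping: dominated functions control chain sums. -/
theorem dominated_chain {α : ℝ} {u : X → ℝ} (hu : Dominated c α u) (p : ℕ → X) (n : ℕ) :
    u (p n) - u (p 0) ≤ (∑ i ∈ Finset.range n, c (p i) (p (i + 1))) + n * α := by
  induction n with
  | zero => simp
  | succ n ih =>
    have h := hu (p n) (p (n + 1))
    rw [Finset.sum_range_succ]
    push_cast
    linarith

/-! ### Facts about `cChain` -/

theorem cChain_set_nonempty (x y : X) {n : ℕ} (hn : 1 ≤ n) :
    {r : ℝ | ∃ p : ℕ → X, p 0 = x ∧ p n = y ∧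
      r = ∑ i ∈ Finset.range n, c (p i) (p (i + 1))}.Nonempty := by
  refine ⟨_, fun i => if i = 0 then x else y, by simp, ?_, rfl⟩
  simp only [if_neg (by omega : ¬ n = 0)]

theorem cChain_set_bddBelow (hsl : UniformlySuperlinear c) (x y : X) (n : ℕ) :
    BddBelow {r : ℝ | ∃ p : ℕ → X, p 0 = x ∧ p n = y ∧
      r = ∑ i ∈ Finset.range n, c (p i) (p (i + 1))} := by
  obtain ⟨C0, hC0⟩ := exists_lb hsl
  refine ⟨-(n * C0), fun r hr => ?_⟩
  obtain ⟨p, hp0, hpn, rfl⟩ := hr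
  calc -((n : ℝ) * C0) = ∑ _i ∈ Finset.range n, (-C0) := by simp [mul_comm]
    _ ≤ _ := Finset.sum_le_sum fun i _ => hC0 _ _

theorem cChain_le_sum (hsl : UniformlySuperlinear c) {x y : X} {n : ℕ} {p : ℕ → X}
    (hp0 : p 0 = x) (hpn : p n = y) :
    cChain c n x y ≤ ∑ i ∈ Finset.range n, c (p i) (p (i + 1)) :=
  csInf_le (cChain_set_bddBelow hsl x y n) ⟨p, hp0, hpn, rfl⟩

theorem le_cChain {α : ℝ} {u : X → ℝ} (hu : Dominated c α u) (x y : X) {n : ℕ} (hn : 1 ≤ n) :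
    u y - u x - n * α ≤ cChain c n x y := by
  refine le_csInf (cChain_set_nonempty x y hn) fun r hr => ?_
  obtain ⟨p, hp0, hpn, rfl⟩ := hr
  have := dominated_chain hu p n
  rw [hp0, hpn] at this
  linarith

theorem cChain_one (x y : X) : cChain c 1 x y = c x y := by
  have : {r : ℝ | ∃ p : ℕ → X, p 0 = x ∧ p 1 = y ∧
      r = ∑ i ∈ Finset.range 1, c (p i) (p (i + 1))} = {c x y} := by
    ext r
    simp only [Finset.sum_range_one, Set.mem_setOf_eq, Set.mem_singleton_iff]
    constructor
    · rintro ⟨p, h0, h1, rfl⟩; rw [h0, h1]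
    · rintro rfl; exact ⟨fun i => if i = 0 then x else y, by simp, by simp, by simp⟩
  rw [cChain, this, csInf_singleton]

/-- Concatenation of chains. -/
theorem cChain_concat (hsl : UniformlySuperlinear c) (x y z : X) {n m : ℕ}
    (hn : 1 ≤ n) (hm : 1 ≤ m) :
    cChain c (n + m) x z ≤ cChain c n x y + cChain c m y z := by
  have key : ∀ r ∈ {r : ℝ | ∃ p : ℕ → X, p 0 = x ∧ p n = y ∧
      r = ∑ i ∈ Finset.range n, c (p i) (p (i + 1))},
      ∀ s ∈ {r : ℝ | ∃ q : ℕ → X, q 0 = y ∧ q m = z ∧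
      r = ∑ i ∈ Finset.range m, c (q i) (q (i + 1))},
      cChain c (n + m) x z ≤ r + s := by
    rintro r ⟨p, hp0, hpn, rfl⟩ s ⟨q, hq0, hqm, rfl⟩
    set pr : ℕ → X := fun i => if i < n then p i else q (i - n) with hpr
    have hpr0 : pr 0 = x := by simp only [hpr, if_pos (by omega : 0 < n), hp0]
    have hprnm : pr (n + m) = z := by
      simp only [hpr, if_neg (by omega : ¬ n + m < n)]
      simpa using hqm
    have hsum : ∑ i ∈ Finset.range (n + m), c (pr i) (pr (i + 1)) =
        (∑ i ∈ Finset.range n, c (p i) (p (i + 1))) +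
        ∑ i ∈ Finset.range m, c (q i) (q (i + 1)) := by
      rw [Finset.sum_range_add]
      congr 1
      · refine Finset.sum_congr rfl fun i hi => ?_
        have hi' := Finset.mem_range.mp hi
        by_cases h : i + 1 < n
        · simp [hpr, hi', h]
        · have : i + 1 = n := by omega
          simp only [hpr, if_pos hi', this, if_neg (lt_irrefl n), Nat.sub_self, hq0, hpn]
      · refine Finset.sum_congr rfl fun i hi => ?_
        simp only [hpr, if_neg (by omega : ¬ n + i < n), if_neg (by omega : ¬ n + i + 1 < n)]
        congr 2 <;> omega
    rw [← hsum]
    exact cChain_le_sum hsl hpr0 hprnm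
  have h1 : ∀ r ∈ {r : ℝ | ∃ p : ℕ → X, p 0 = x ∧ p n = y ∧
      r = ∑ i ∈ Finset.range n, c (p i) (p (i + 1))},
      cChain c (n + m) x z - r ≤ cChain c m y z := by
    intro r hr
    refine le_csInf (cChain_set_nonempty y z hm) fun s hs => ?_
    linarith [key r hr s hs]
  have h2 : cChain c (n + m) x z - cChain c m y z ≤ cChain c n x y := by
    refine le_csInf (cChain_set_nonempty x y hn) fun r hr => ?_
    linarith [h1 r hr]
  linarith

/-- Loops have nonnegative критical cost. -/
theorem loop_nonneg (hsl : UniformlySuperlinear c) (x : X) (n : ℕ) :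
    0 ≤ cChain c n x x + n * critValue c := by
  rcases Nat.eq_zero_or_pos n with rfl | hn
  · have hset : {r : ℝ | ∃ p : ℕ → X, p 0 = x ∧ p 0 = x ∧
        r = ∑ i ∈ Finset.range 0, c (p i) (p (i + 1))} = {(0:ℝ)} := by
      ext r
      constructor
      · rintro ⟨p, _, _, rfl⟩; simp
      · rintro rfl; exact ⟨fun _ => x, rfl, rfl, by simp⟩
    show 0 ≤ cChain c 0 x x + (0:ℕ) * critValue c
    rw [cChain, hset, csInf_singleton]
    simp
  have key : ∀ ε > 0, 0 ≤ cChain c n x x + n * critValue c + n * ε := by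
    intro ε hε
    obtain ⟨a, u, hu, ha⟩ := exists_dom_lt hsl hε
    have h := le_cChain hu x x hn
    have hna : (n : ℝ) * a ≤ n * (critValue c + ε) := by
      apply mul_le_mul_of_nonneg_left (le_of_lt ha) (by positivity)
    have hexp : (n : ℝ) * (critValue c + ε) = n * critValue c + n * ε := by ring
    linarith
  by_contra h
  push_neg at h
  have hnn : (0:ℝ) < n := by exact_mod_cast hn
  have hε : 0 < (-(cChain c n x x + n * critValue c)) / (2 * n) :=
    div_pos (by linarith) (by positivity)
  have hmul : (n : ℝ) * ((-(cChain c n x x + n * critValue c)) / (2 * n)) =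
      -(cChain c n x x + n * critValue c) / 2 := by
    field_simp
  linarith [key _ hε, hmul]

end AubryWork

namespace AubryWork

set_option linter.unusedSectionVars false

variable {X : Type*} [MetricSpace X] [Nonempty X] {c : X → X → ℝ}

/-! ### The Mañé potential -/

noncomputable def Phi (c : X → X → ℝ) (x y : X) : ℝ :=
  sInf {r : ℝ | ∃ n : ℕ, 1 ≤ n ∧ r = cChain c n x y + n * critValue c}

theorem Phi_set_nonempty (x y : X) :
    {r : ℝ | ∃ n : ℕ, 1 ≤ n ∧ r = cChain c n x y + n * critValue c}.Nonempty :=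
  ⟨_, 1, le_rfl, rfl⟩

theorem chain_plus_ge (hsl : UniformlySuperlinear c) (x y : X) {n : ℕ} (hn : 1 ≤ n) :
    -(c y x + critValue c) ≤ cChain c n x y + n * critValue c := by
  have h1 := cChain_concat hsl x y x hn (le_refl 1)
  rw [cChain_one] at h1
  have h2 := loop_nonneg hsl x (n + 1)
  push_cast at h2 ⊢
  linarith

theorem Phi_set_bddBelow (hsl : UniformlySuperlinear c) (x y : X) :
    BddBelow {r : ℝ | ∃ n : ℕ, 1 ≤ n ∧ r = cChain c n x y + n * critValue c} := by
  refine ⟨-(c y x + critValue c), fun r hr => ?_⟩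
  obtain ⟨n, hn, rfl⟩ := hr
  exact chain_plus_ge hsl x y hn

theorem Phi_le_chain (hsl : UniformlySuperlinear c) (x y : X) {n : ℕ} (hn : 1 ≤ n) :
    Phi c x y ≤ cChain c n x y + n * critValue c :=
  csInf_le (Phi_set_bddBelow hsl x y) ⟨n, hn, rfl⟩

theorem Phi_le_c (hsl : UniformlySuperlinear c) (x y : X) :
    Phi c x y ≤ c x y + critValue c := by
  have := Phi_le_chain hsl x y (le_refl 1)
  rwa [cChain_one, Nat.cast_one, one_mul] at this

theorem usub_le_Phi {u : X → ℝ} (hu : Dominated c (critValue c) u) (x y : X) :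
    u y - u x ≤ Phi c x y := by
  refine le_csInf (Phi_set_nonempty x y) fun r hr => ?_
  obtain ⟨n, hn, rfl⟩ := hr
  linarith [le_cChain hu x y hn]

theorem Phi_subadd (hsl : UniformlySuperlinear c) (x y z : X) :
    Phi c x z ≤ Phi c x y + Phi c y z := by
  have key : ∀ r ∈ {r : ℝ | ∃ n : ℕ, 1 ≤ n ∧ r = cChain c n x y + n * critValue c},
      ∀ s ∈ {r : ℝ | ∃ n : ℕ, 1 ≤ n ∧ r = cChain c n y z + n * critValue c},
      Phi c x z ≤ r + s := by
    rintro r ⟨n, hn, rfl⟩ s ⟨m, hm, rfl⟩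
    have h1 := cChain_concat hsl x y z hn hm
    have h2 := Phi_le_chain hsl x z (le_trans hn (Nat.le_add_right n m))
    push_cast at h2
    linarith
  have h1 : ∀ r ∈ {r : ℝ | ∃ n : ℕ, 1 ≤ n ∧ r = cChain c n x y + n * critValue c},
      Phi c x z - r ≤ Phi c y z := by
    intro r hr
    exact le_csInf (Phi_set_nonempty y z) fun s hs => by linarith [key r hr s hs]
  have h2 : Phi c x z - Phi c y z ≤ Phi c x y :=
    le_csInf (Phi_set_nonempty x y) fun r hr => by linarith [h1 r hr]
  linarith

theorem Phi_diag_nonneg (hsl : UniformlySuperlinear c) (x : X) : 0 ≤ Phi c x x := by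
  refine le_csInf (Phi_set_nonempty x x) fun r hr => ?_
  obtain ⟨n, _, rfl⟩ := hr
  exact loop_nonneg hsl x n

theorem neg_Phi_le_Phi (hsl : UniformlySuperlinear c) (x y : X) :
    -Phi c y x ≤ Phi c x y := by
  have h1 := Phi_subadd hsl y x y
  have h2 := Phi_diag_nonneg hsl y
  linarith

theorem Phi_dom_right (hsl : UniformlySuperlinear c) (x : X) :
    Dominated c (critValue c) (fun y => Phi c x y) := by
  intro a b
  have h1 := Phi_subadd hsl x a b
  have h2 := Phi_le_c hsl a b
  simp only
  linarith

theorem Phi_dom_left (hsl : UniformlySuperlinear c) (y : X) :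
    Dominated c (critValue c) (fun p => -Phi c p y) := by
  intro a b
  have h1 := Phi_subadd hsl a b y
  have h2 := Phi_le_c hsl a b
  simp only
  linarith

theorem exists_cChain_lt (hsl : UniformlySuperlinear c) (x y : X) {ε : ℝ} (hε : 0 < ε) :
    ∃ n : ℕ, 1 ≤ n ∧ cChain c n x y + n * critValue c < Phi c x y + ε := by
  obtain ⟨r, ⟨n, hn, rfl⟩, hr⟩ := Real.lt_sInf_add_pos (Phi_set_nonempty (c := c) x y) hε
  exact ⟨n, hn, hr⟩

theorem exists_chain_lt (hsl : UniformlySuperlinear c) (x y : X) {ε : ℝ} (hε : 0 < ε) :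
    ∃ (n : ℕ) (p : ℕ → X), 1 ≤ n ∧ p 0 = x ∧ p n = y ∧
      (∑ i ∈ Finset.range n, c (p i) (p (i + 1))) + n * critValue c < Phi c x y + ε := by
  obtain ⟨n, hn, hr⟩ := exists_cChain_lt hsl x y (half_pos hε)
  obtain ⟨s, ⟨p, hp0, hpn, rfl⟩, hs⟩ :=
    Real.lt_sInf_add_pos (cChain_set_nonempty (c := c) x y hn) (half_pos hε)
  refine ⟨n, p, hn, hp0, hpn, ?_⟩
  rw [show sInf {r : ℝ | ∃ p : ℕ → X, p 0 = x ∧ p n = y ∧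
      r = ∑ i ∈ Finset.range n, c (p i) (p (i + 1))} = cChain c n x y from rfl] at hs
  linarith

/-! ### Chains from calibrated sequences -/

theorem calibrated_chain_sum (hsl : UniformlySuperlinear c) (z : ℤ → X) (m : ℤ) (k : ℕ) :
    cChain c k (z m) (z (m + k)) ≤ ∑ i ∈ Finset.range k, c (z (m + i)) (z (m + i + 1)) := by
  have h : cChain c k (z m) (z (m + k)) ≤
      ∑ i ∈ Finset.range k, c (z (m + i)) (z (m + (i + 1 : ℕ))) := by
    refine cChain_le_sum hsl (p := fun i : ℕ => z (m + i)) (by norm_num) rfl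
  refine le_trans h (le_of_eq (Finset.sum_congr rfl fun i _ => ?_))
  have he : (m + ((i + 1 : ℕ) : ℤ)) = m + i + 1 := by push_cast; ring
  rw [he]

/-! ### Direction ⊆ : the Aubry set is contained in the zero set -/

theorem Phi_diag_eq_zero_of_aubry (hsl : UniformlySuperlinear c) {x : X}
    (hx : x ∈ projAubrySet c) : Phi c x x = 0 := by
  obtain ⟨z, hz, hz0⟩ := hx _ (Phi_dom_right hsl x)
  have h := hz 0 1
  simp only [Finset.sum_range_one, Nat.cast_one, one_mul, Nat.cast_zero, add_zero,
    zero_add, Nat.cast_ofNat] at h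
  rw [hz0] at h
  have h2 := Phi_le_c hsl x (z 1)
  refine le_antisymm ?_ (Phi_diag_nonneg hsl x)
  linarith

theorem peierls_nonneg (hsl : UniformlySuperlinear c) (x : X) :
    (0 : EReal) ≤ peierls c (critValue c) x x := by
  rw [peierls, Filter.liminf_eq]
  refine le_sSup ?_
  refine Filter.Eventually.of_forall fun n => ?_
  exact_mod_cast loop_nonneg hsl x n

theorem peierls_diag_zero_of_aubry (hsl : UniformlySuperlinear c) {x : X}
    (hx : x ∈ projAubrySet c) : peierls c (critValue c) x x = 0 := by
  have hPhi : Phi c x x = 0 := Phi_diag_eq_zero_of_aubry hsl hx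
  obtain ⟨z, hz, hz0⟩ := hx _ (Phi_dom_left hsl x)
  refine le_antisymm ?_ (peierls_nonneg hsl x)
  have key : ∀ ε : ℝ, 0 < ε → peierls c (critValue c) x x ≤ (ε : EReal) := by
    intro ε hε
    rw [peierls]
    refine Filter.liminf_le_of_frequently_le' ?_
    rw [Filter.frequently_atTop]
    intro N
    set k := N + 1 with hk
    have hcal := hz 0 k
    have h1 := calibrated_chain_sum hsl z 0 k
    simp only [zero_add] at hcal h1
    rw [hz0] at hcal h1
    -- hcal : -Phi c (z ↑k) x = -Phi c x x + S + k * critValue c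
    -- h1 : cChain c k x (z ↑k) ≤ S
    obtain ⟨m, hm, hmlt⟩ := exists_cChain_lt hsl (z (k : ℤ)) x (half_pos hε)
    refine ⟨k + m, by omega, ?_⟩
    have hcat := cChain_concat hsl x (z (k : ℤ)) x (by omega : 1 ≤ k) hm
    have hfinal : cChain c (k + m) x x + ((k + m : ℕ) : ℝ) * critValue c < ε := by
      rw [hPhi] at hcal
      have hkc : ((k + m : ℕ) : ℝ) * critValue c = (k : ℝ) * critValue c + (m:ℝ) * critValue c := by
        push_cast; ring
      rw [hkc]
      linarith [hcat, hmlt, hcal, h1]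
    exact_mod_cast le_of_lt hfinal
  by_contra hne
  have hlt : (0 : EReal) < peierls c (critValue c) x x := not_le.mp hne
  obtain ⟨r, hr0, hrP⟩ := EReal.lt_iff_exists_real_btwn.mp hlt
  have hrpos : (0:ℝ) < r := by exact_mod_cast hr0
  exact absurd (key r hrpos) (not_le.mpr hrP)

end AubryWork

namespace AubryWork

set_option linter.unusedSectionVars false

variable {X : Type*} [MetricSpace X] [Nonempty X] {c : X → X → ℝ} {B K : ℝ}

/-! ### Subadditive functions on a length space are linearly bounded -/

theorem subadd_bound (hK : 0 < K) (hlen : IsBLengthSpaceAtScale X B K)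
    {F : X → X → ℝ} {M : ℝ} (hM : 0 ≤ M)
    (hloc : ∀ a b : X, dist a b ≤ 2 * K → F a b ≤ M)
    (hsub : ∀ a b d : X, F a d ≤ F a b + F b d) (a b : X) :
    F a b ≤ M * (B * dist a b / K + 1) := by
  classical
  have main : ∀ n : ℕ, ∀ p : ℕ → X, (∀ i < n, dist (p i) (p (i+1)) ≤ K) →
      F (p 0) (p n) ≤ M * ((∑ i ∈ Finset.range n, dist (p i) (p (i+1))) / K + 1) := by
    intro n
    induction n using Nat.strong_induction_on with
    | _ n ih =>
      intro p hstep
      rcases Nat.eq_zero_or_pos n with rfl | hn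
      · have h0 := hloc (p 0) (p 0) (by simp; positivity)
        simpa using h0
      set S : ℕ → ℝ := fun j => ∑ i ∈ Finset.range j, dist (p i) (p (i+1)) with hS
      have hSmono : ∀ j, 0 ≤ S j := fun j => Finset.sum_nonneg fun i _ => dist_nonneg
      set P : ℕ → Prop := fun j => S j ≤ 2 * K with hP
      have hP1 : P 1 := by
        have := hstep 0 hn
        simp only [hP, hS, Finset.sum_range_one]
        linarith
      set i₀ := Nat.findGreatest P n with hi₀
      have hi₀P : P i₀ := Nat.findGreatest_spec hn hP1
      have hi₀1 : 1 ≤ i₀ := Nat.le_findGreatest hn hP1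
      have hi₀n : i₀ ≤ n := Nat.findGreatest_le n
      have hdist0 : dist (p 0) (p i₀) ≤ 2 * K :=
        le_trans (dist_le_range_sum_dist p i₀) hi₀P
      rcases eq_or_lt_of_le hi₀n with heq | hlt
      · rw [← heq]
        have := hloc (p 0) (p i₀) hdist0
        have hpos : 0 ≤ M * (S i₀ / K) := by positivity
        calc F (p 0) (p i₀) ≤ M := this
          _ ≤ M * (S i₀ / K + 1) := by rw [mul_add, mul_one]; linarith
      · -- i₀ < n
        have hnP : ¬ P (i₀ + 1) := by
          have h := Nat.findGreatest_is_greatest (P := P) (k := i₀ + 1) (n := n)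
          rw [← hi₀] at h
          exact h (by omega) (by omega)
        have hSsucc : S (i₀ + 1) = S i₀ + dist (p i₀) (p (i₀+1)) := by
          simp [hS, Finset.sum_range_succ]
        have hKlt : K < S i₀ := by
          have hd := hstep i₀ hlt
          have : 2 * K < S (i₀ + 1) := not_le.mp hnP
          rw [hSsucc] at this
          linarith
        -- tail chain
        set q : ℕ → X := fun l => p (i₀ + l) with hq
        have hqstep : ∀ l < n - i₀, dist (q l) (q (l+1)) ≤ K := by
          intro l hl
          have : i₀ + l < n := by omega
          simpa [hq, Nat.add_assoc] using hstep (i₀ + l) this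
        have htail := ih (n - i₀) (by omega) q hqstep
        have hq0 : q 0 = p i₀ := by simp [hq]
        have hqend : q (n - i₀) = p n := by simp [hq]; congr 1; omega
        have hsumq : ∑ l ∈ Finset.range (n - i₀), dist (q l) (q (l+1)) = S n - S i₀ := by
          have h1 : ∀ k, S (i₀ + k) = S i₀ +
              ∑ x ∈ Finset.range k, dist (p (i₀ + x)) (p (i₀ + x + 1)) := by
            intro k
            simp only [hS]
            rw [Finset.sum_range_add]
          have h2 := h1 (n - i₀)
          rw [show i₀ + (n - i₀) = n from by omega] at h2
          have h3 : ∑ x ∈ Finset.range (n - i₀), dist (p (i₀ + x)) (p (i₀ + x + 1)) =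
              ∑ l ∈ Finset.range (n - i₀), dist (q l) (q (l+1)) :=
            Finset.sum_congr rfl fun x _ => by simp [hq, Nat.add_assoc]
          rw [h3] at h2
          linarith
        rw [hq0, hqend, hsumq] at htail
        have hFsplit := hsub (p 0) (p i₀) (p n)
        have hF1 := hloc (p 0) (p i₀) hdist0
        have hmul : M * ((S n - S i₀) / K + 1) ≤ M * (S n / K) := by
          apply mul_le_mul_of_nonneg_left _ hM
          have he : (S n - S i₀) / K + 1 = (S n - S i₀ + K) / K := by field_simp
          rw [he]
          gcongr
          linarith
        calc F (p 0) (p n) ≤ F (p 0) (p i₀) + F (p i₀) (p n) := hFsplit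
          _ ≤ M + M * ((S n - S i₀) / K + 1) := add_le_add hF1 htail
          _ ≤ M + M * (S n / K) := by linarith
          _ = M * (S n / K + 1) := by ring
  obtain ⟨n, p, hp0, hpn, hstep, hlensum⟩ := hlen a b
  have := main n p hstep
  rw [hp0, hpn] at this
  refine le_trans this ?_
  apply mul_le_mul_of_nonneg_left _ hM
  gcongr

end AubryWork

namespace AubryWork

set_option linter.unusedSectionVars false

variable {X : Type*} [MetricSpace X] [Nonempty X] {c : X → X → ℝ} {B K : ℝ}

theorem Phi_kappa (hB : 1 ≤ B) (hK : 0 < K) (hlen : IsBLengthSpaceAtScale X B K)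
    (hsl : UniformlySuperlinear c) (hub : UniformlyBounded c) :
    ∃ κ M : ℝ, 0 ≤ κ ∧ 0 ≤ M ∧ ∀ a b : X, Phi c a b ≤ κ * dist a b + M := by
  obtain ⟨A, hA⟩ := hub (2 * K)
  set M := max (A + critValue c) 0 with hM
  have hM0 : 0 ≤ M := le_max_right _ _
  have hB0 : 0 < B := by linarith
  refine ⟨M * B / K, M, by positivity, hM0, fun a b => ?_⟩
  have hloc : ∀ a b : X, dist a b ≤ 2 * K → Phi c a b ≤ M := by
    intro a b hab
    calc Phi c a b ≤ c a b + critValue c := Phi_le_c hsl a b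
      _ ≤ A + critValue c := by linarith [hA a b hab]
      _ ≤ M := le_max_left _ _
  have := subadd_bound hK hlen hM0 hloc (Phi_subadd hsl) a b
  calc Phi c a b ≤ M * (B * dist a b / K + 1) := this
    _ = M * B / K * dist a b + M := by ring

theorem Phi_lsc [ProperSpace X] (hB : 1 ≤ B) (hK : 0 < K)
    (hlen : IsBLengthSpaceAtScale X B K)
    (hcont : Continuous fun q : X × X => c q.1 q.2)
    (hsl : UniformlySuperlinear c) (hub : UniformlyBounded c)
    (a b : X) {ε : ℝ} (hε : 0 < ε) :
    ∃ δ > 0, ∀ a' b' : X, dist a a' ≤ δ → dist b b' ≤ δ →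
      Phi c a b ≤ Phi c a' b' + ε := by
  obtain ⟨κ, M, hκ0, hM0, hbd⟩ := Phi_kappa hB hK hlen hsl hub
  obtain ⟨Ck, hCk⟩ := hsl (κ + 1) (by linarith)
  set Ck' := max Ck 0 with hCk'def
  have hCk'0 : 0 ≤ Ck' := le_max_right _ _
  have hCk' : ∀ x y : X, (κ + 1) * dist x y - Ck' ≤ c x y := by
    intro x y
    have h1 := hCk x y
    have h2 : Ck ≤ Ck' := le_max_left _ _
    linarith
  set α := critValue c with hα
  set Λ := κ * (dist a b + 2) + M with hΛ
  have hΛ0 : 0 ≤ Λ := by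
    have : 0 ≤ κ * (dist a b + 2) := mul_nonneg hκ0 (by positivity)
    linarith
  set ρ := Λ + ε + Ck' + M + |α| + κ * (dist a b + 2) with hρ
  have hρ0 : 0 < ρ := by
    have : 0 ≤ κ * (dist a b + 2) := mul_nonneg hκ0 (by positivity)
    have := abs_nonneg α
    linarith
  set RR := ρ + dist a b + 3 with hRR
  have hRR0 : 0 < RR := by have := dist_nonneg (x := a) (y := b); linarith
  set s : Set (X × X) := (closedBall a RR) ×ˢ (closedBall a RR) with hs
  have hcmp : IsCompact s := (isCompact_closedBall a RR).prod (isCompact_closedBall a RR)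
  have huc := hcmp.uniformContinuousOn_of_continuous hcont.continuousOn
  rw [Metric.uniformContinuousOn_iff] at huc
  obtain ⟨δ', hδ'0, hδ'⟩ := huc (ε/6) (by positivity)
  refine ⟨min 1 (δ'/2), by positivity, fun a' b' ha' hb' => ?_⟩
  have ha'1 : dist a a' ≤ 1 := le_trans ha' (min_le_left _ _)
  have hb'1 : dist b b' ≤ 1 := le_trans hb' (min_le_left _ _)
  have ha'δ : dist a a' < δ' := by
    have := le_trans ha' (min_le_right _ _); linarith
  have hb'δ : dist b b' < δ' := by
    have := le_trans hb' (min_le_right _ _); linarith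
  -- basic distance facts
  have hda'b' : dist a' b' ≤ dist a b + 2 := by
    calc dist a' b' ≤ dist a' a + dist a b + dist b b' := dist_triangle4 a' a b b'
      _ ≤ 1 + dist a b + 1 := by
          have := dist_comm a a' ▸ ha'1
          linarith [dist_comm a' a, ha'1, hb'1]
      _ = dist a b + 2 := by ring
  have hPhiΛ : Phi c a' b' ≤ Λ := by
    have h1 := hbd a' b'
    have h2 : κ * dist a' b' ≤ κ * (dist a b + 2) := mul_le_mul_of_nonneg_left hda'b' hκ0
    linarith
  -- memberships
  have hmem_a : a ∈ closedBall a RR := mem_closedBall_self (le_of_lt hRR0)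
  have hmem_a' : a' ∈ closedBall a RR := by
    rw [mem_closedBall, dist_comm]; linarith [dist_nonneg (x := a) (y := b)]
  have hmem_b : b ∈ closedBall a RR := by
    rw [mem_closedBall, dist_comm]; linarith [dist_nonneg (x := a) (y := b)]
  have hmem_b' : b' ∈ closedBall a RR := by
    rw [mem_closedBall]
    calc dist b' a ≤ dist b' b + dist b a := dist_triangle _ _ _
      _ ≤ 1 + dist a b := by rw [dist_comm b' b, dist_comm b a]; linarith
      _ ≤ RR := by linarith
  -- the near-optimal chain
  obtain ⟨n, p, hn1, hp0, hpn, hval⟩ := exists_chain_lt hsl a' b' (by positivity : (0:ℝ) < ε/6)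
  rcases eq_or_lt_of_le hn1 with h1 | h2
  · -- n = 1
    rw [← h1] at hval hpn
    simp only [Finset.sum_range_one, Nat.cast_one, one_mul] at hval
    rw [hp0, hpn] at hval
    have hcc : dist (c a b) (c a' b') < ε/6 := by
      have := hδ' (a, b) (by exact Set.mk_mem_prod hmem_a hmem_b)
        (a', b') (Set.mk_mem_prod hmem_a' hmem_b')
        (by rw [Prod.dist_eq]; simp only; exact max_lt ha'δ hb'δ)
      exact this
    have hcc' : c a b ≤ c a' b' + ε/6 := by
      have := abs_sub_le_iff.mp (le_of_lt (Real.dist_eq (c a b) (c a' b') ▸ hcc))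
      linarith [this.1]
    have := Phi_le_c hsl a b
    linarith
  · -- n ≥ 2
    obtain ⟨m, rfl⟩ : ∃ m, n = m + 2 := ⟨n - 2, by omega⟩
    set f : ℕ → ℝ := fun i => c (p i) (p (i+1)) with hf
    set z := p 1 with hz
    set w := p (m+1) with hw
    set rest := ∑ l ∈ Finset.range (m+1), f (l+1) with hrest
    set pref := ∑ l ∈ Finset.range (m+1), f l with hpref
    have hsum1 : ∑ i ∈ Finset.range (m+2), f i = rest + f 0 := Finset.sum_range_succ' f (m+1)
    have hsum2 : ∑ i ∈ Finset.range (m+2), f i = pref + f (m+1) := Finset.sum_range_succ f (m+1)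
    have hmm : m + 1 + 1 = m + 2 := rfl
    have hf0 : f 0 = c a' z := by simp only [hf, hz, hp0]
    have hfm : f (m+1) = c w b' := by
      simp only [hf, hw, hmm, hpn]
    -- chains
    have hrest_chain : cChain c (m+1) z b' ≤ rest := by
      have hend : (fun l => p (l+1)) (m+1) = b' := by
        show p (m+1+1) = b'
        rw [hmm, hpn]
      exact cChain_le_sum hsl (p := fun l => p (l+1)) (n := m+1) rfl hend
    have hpref_chain : cChain c (m+1) a' w ≤ pref := by
      exact cChain_le_sum hsl (p := p) (n := m+1) hp0 rfl
    have hPhirest : Phi c z b' ≤ rest + ((m+1:ℕ):ℝ) * α := by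
      have := Phi_le_chain hsl z b' (n := m+1) (by omega)
      linarith
    have hPhipref : Phi c a' w ≤ pref + ((m+1:ℕ):ℝ) * α := by
      have := Phi_le_chain hsl a' w (n := m+1) (by omega)
      linarith
    have hcast : ((m+2:ℕ):ℝ) * α = ((m+1:ℕ):ℝ) * α + α := by push_cast; ring
    have hval' : (rest + c a' z) + ((m+2:ℕ):ℝ) * α < Phi c a' b' + ε/6 := by
      rw [hsum1, hf0] at hval
      linarith
    have hval'' : (pref + c w b') + ((m+2:ℕ):ℝ) * α < Phi c a' b' + ε/6 := by
      rw [hsum2, hfm] at hval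
      linarith
    -- bound on dist a' z
    have hzb : dist a' z ≤ ρ := by
      have e1 : (κ + 1) * dist a' z - Ck' ≤ c a' z := hCk' a' z
      have e2a : Phi c b' z ≤ κ * dist b' z + M := hbd b' z
      have e2b : -Phi c b' z ≤ Phi c z b' := neg_Phi_le_Phi hsl z b'
      have e6a : κ * dist b' z ≤ κ * (dist b' a' + dist a' z) :=
        mul_le_mul_of_nonneg_left (dist_triangle b' a' z) hκ0
      have e6b : κ * (dist b' a' + dist a' z) = κ * dist b' a' + κ * dist a' z := by ring
      have e7 : κ * dist b' a' ≤ κ * (dist a b + 2) :=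
        mul_le_mul_of_nonneg_left (by rw [dist_comm]; exact hda'b') hκ0
      have e8 : (κ + 1) * dist a' z = κ * dist a' z + dist a' z := by ring
      have e9 : -α ≤ |α| := neg_le_abs α
      have := hPhiΛ
      rw [hρ]
      linarith
    -- bound on dist w b'
    have hwb : dist w b' ≤ ρ := by
      have e1 : (κ + 1) * dist w b' - Ck' ≤ c w b' := hCk' w b'
      have e2a : Phi c w a' ≤ κ * dist w a' + M := hbd w a'
      have e2b : -Phi c w a' ≤ Phi c a' w := neg_Phi_le_Phi hsl a' w
      have e6a : κ * dist w a' ≤ κ * (dist w b' + dist b' a') :=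
        mul_le_mul_of_nonneg_left (dist_triangle w b' a') hκ0
      have e6b : κ * (dist w b' + dist b' a') = κ * dist w b' + κ * dist b' a' := by ring
      have e7 : κ * dist b' a' ≤ κ * (dist a b + 2) :=
        mul_le_mul_of_nonneg_left (by rw [dist_comm]; exact hda'b') hκ0
      have e8 : (κ + 1) * dist w b' = κ * dist w b' + dist w b' := by ring
      have e9 : -α ≤ |α| := neg_le_abs α
      have := hPhiΛ
      rw [hρ]
      linarith
    -- memberships of z and w
    have hmem_z : z ∈ closedBall a RR := by
      rw [mem_closedBall]
      calc dist z a ≤ dist z a' + dist a' a := dist_triangle _ _ _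
        _ ≤ ρ + 1 := by
            rw [dist_comm z a', dist_comm a' a]
            linarith
        _ ≤ RR := by linarith [dist_nonneg (x := a) (y := b)]
    have hmem_w : w ∈ closedBall a RR := by
      rw [mem_closedBall]
      calc dist w a ≤ dist w b' + dist b' a := dist_triangle _ _ _
        _ ≤ ρ + (1 + dist a b) := by
            have : dist b' a ≤ dist b' b + dist b a := dist_triangle _ _ _
            rw [dist_comm b' b, dist_comm b a] at this
            linarith
        _ ≤ RR := by linarith
    -- uniform continuity replacements
    have hrep1 : c a z ≤ c a' z + ε/6 := by
      have hd := hδ' (a, z) (Set.mk_mem_prod hmem_a hmem_z)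
        (a', z) (Set.mk_mem_prod hmem_a' hmem_z)
        (by rw [Prod.dist_eq]; simp only [dist_self]
            exact max_lt ha'δ hδ'0)
      rw [Real.dist_eq] at hd
      have := abs_sub_le_iff.mp (le_of_lt hd)
      linarith [this.1]
    have hrep2 : c w b ≤ c w b' + ε/6 := by
      have hd := hδ' (w, b) (Set.mk_mem_prod hmem_w hmem_b)
        (w, b') (Set.mk_mem_prod hmem_w hmem_b')
        (by rw [Prod.dist_eq]; simp only [dist_self]
            exact max_lt hδ'0 hb'δ)
      rw [Real.dist_eq] at hd
      have := abs_sub_le_iff.mp (le_of_lt hd)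
      linarith [this.1]
    -- modified chain
    set p' : ℕ → X := fun i => if i = 0 then a else if i = m + 2 then b else p i with hp'
    have hp'0 : p' 0 = a := by simp [hp']
    have hp'n : p' (m+2) = b := by simp [hp']
    set f' : ℕ → ℝ := fun i => c (p' i) (p' (i+1)) with hf'
    have hmid : ∀ l, l < m → f' (l+1) = f (l+1) := by
      intro l hl
      rw [hf', hf]
      simp only
      congr 1
      · rw [hp']; simp only [if_neg (by omega : ¬ l + 1 = 0), if_neg (by omega : ¬ l + 1 = m + 2)]
      · rw [hp']; simp only [if_neg (by omega : ¬ l + 1 + 1 = 0),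
          if_neg (by omega : ¬ l + 1 + 1 = m + 2)]
    have hp'1 : p' 1 = z := by
      simp only [hp']
      rw [if_neg (one_ne_zero), if_neg (by omega : ¬ (1:ℕ) = m + 2)]
    have hp'm1 : p' (m+1) = w := by
      simp only [hp']
      rw [if_neg (by omega : ¬ m + 1 = 0), if_neg (by omega : ¬ m + 1 = m + 2)]
    have hf'0 : f' 0 = c a z := by
      rw [hf']
      show c (p' 0) (p' (0+1)) = c a z
      rw [hp'0, show (0:ℕ) + 1 = 1 from rfl, hp'1]
    have hf'm : f' (m+1) = c w b := by
      rw [hf']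
      show c (p' (m+1)) (p' (m+1+1)) = c w b
      rw [hp'm1, show m + 1 + 1 = m + 2 from rfl, hp'n]
    have hsum' : ∑ i ∈ Finset.range (m+2), f' i =
        (∑ l ∈ Finset.range m, f (l+1)) + c w b + c a z := by
      rw [Finset.sum_range_succ' f' (m+1), Finset.sum_range_succ (fun l => f' (l+1)) m]
      rw [hf'0, hf'm]
      congr 1
      congr 1
      exact Finset.sum_congr rfl fun l hl => hmid l (Finset.mem_range.mp hl)
    have hrest_split : rest = (∑ l ∈ Finset.range m, f (l+1)) + c w b' := by
      rw [hrest, Finset.sum_range_succ (fun l => f (l+1)) m, hfm]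
    have hPhi_ab : Phi c a b ≤ (∑ i ∈ Finset.range (m+2), f' i) + ((m+2:ℕ):ℝ) * α := by
      have h1 := cChain_le_sum hsl hp'0 hp'n
      have h2 := Phi_le_chain hsl a b (n := m+2) (by omega)
      rw [hf']
      linarith [h1, h2]
    rw [hsum'] at hPhi_ab
    rw [hrest_split] at hval'
    -- combine everything
    linarith [hPhi_ab, hval', hrep1, hrep2]

end AubryWork

namespace AubryWork

set_option linter.unusedSectionVars false

variable {X : Type*} [MetricSpace X] [Nonempty X] {c : X → X → ℝ} {κ M Ck' : ℝ}

/-! ### Distance bounds along near-optimal loops -/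

theorem loop_forward (hsl : UniformlySuperlinear c)
    (hκ0 : 0 ≤ κ) (hbd : ∀ a b : X, Phi c a b ≤ κ * dist a b + M)
    (hCk' : ∀ x y : X, (κ + 1) * dist x y - Ck' ≤ c x y)
    {x : X} {n i : ℕ} {p : ℕ → X} (hp0 : p 0 = x) (hpn : p n = x)
    {ε : ℝ} (hdef : (∑ l ∈ Finset.range n, c (p l) (p (l+1))) + n * critValue c ≤ ε)
    (hi : i + 1 ≤ n) :
    dist x (p i) ≤ ε + M + i * (Ck' + |critValue c|) := by
  set α := critValue c with hα
  set f : ℕ → ℝ := fun l => c (p l) (p (l+1)) with hf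
  have hsplit : ∑ l ∈ Finset.range n, f l =
      (∑ l ∈ Finset.range i, f l) + ∑ l ∈ Finset.range (n - i), f (i + l) := by
    rw [← Finset.sum_range_add f i (n - i), show i + (n - i) = n from by omega]
  have hchain : cChain c (n - i) (p i) x ≤ ∑ l ∈ Finset.range (n - i), f (i + l) := by
    have hend : (fun l => p (i + l)) (n - i) = x := by
      show p (i + (n - i)) = x
      rw [show i + (n - i) = n from by omega, hpn]
    exact cChain_le_sum hsl (p := fun l => p (i + l)) rfl hend
  have hPhi1 : Phi c (p i) x ≤ (∑ l ∈ Finset.range (n - i), f (i + l)) + ((n - i : ℕ):ℝ) * α := by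
    have := Phi_le_chain hsl (p i) x (n := n - i) (by omega)
    linarith
  have hPhi2 : -(κ * dist x (p i) + M) ≤ Phi c (p i) x := by
    have h1 := neg_Phi_le_Phi hsl (p i) x
    have h2 := hbd x (p i)
    linarith
  have hP : (κ + 1) * dist x (p i) - i * Ck' ≤ ∑ l ∈ Finset.range i, f l := by
    have h1 : ∑ l ∈ Finset.range i, ((κ + 1) * dist (p l) (p (l+1)) - Ck') ≤
        ∑ l ∈ Finset.range i, f l :=
      Finset.sum_le_sum fun l _ => hCk' (p l) (p (l+1))
    have h2 : ∑ l ∈ Finset.range i, ((κ + 1) * dist (p l) (p (l+1)) - Ck') =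
        (κ + 1) * (∑ l ∈ Finset.range i, dist (p l) (p (l+1))) - i * Ck' := by
      rw [Finset.sum_sub_distrib, ← Finset.mul_sum, Finset.sum_const, Finset.card_range,
        nsmul_eq_mul]
    have h3 : (κ + 1) * dist (p 0) (p i) ≤
        (κ + 1) * (∑ l ∈ Finset.range i, dist (p l) (p (l+1))) :=
      mul_le_mul_of_nonneg_left (dist_le_range_sum_dist p i) (by linarith)
    rw [hp0] at h3
    linarith
  have hcast : (n:ℝ) * α = (i:ℝ) * α + ((n - i : ℕ):ℝ) * α := by
    rw [Nat.cast_sub (by omega)]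
    ring
  have e8 : (κ + 1) * dist x (p i) = κ * dist x (p i) + dist x (p i) := by ring
  have e9 : -((i:ℝ) * α) ≤ (i:ℝ) * |α| := by
    have h := mul_le_mul_of_nonneg_left (neg_le_abs α) (Nat.cast_nonneg (α := ℝ) i)
    linarith [h, (by ring : (i:ℝ) * -α = -((i:ℝ) * α))]
  have e10 : (i:ℝ) * (Ck' + |α|) = (i:ℝ) * Ck' + (i:ℝ) * |α| := by ring
  rw [hsplit] at hdef
  linarith

theorem loop_backward (hsl : UniformlySuperlinear c)
    (hκ0 : 0 ≤ κ) (hbd : ∀ a b : X, Phi c a b ≤ κ * dist a b + M)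
    (hCk' : ∀ x y : X, (κ + 1) * dist x y - Ck' ≤ c x y)
    {x : X} {n j : ℕ} {p : ℕ → X} (hp0 : p 0 = x) (hpn : p n = x)
    {ε : ℝ} (hdef : (∑ l ∈ Finset.range n, c (p l) (p (l+1))) + n * critValue c ≤ ε)
    (hj : 1 ≤ j) (hjn : j + 1 ≤ n) :
    dist x (p (n - j)) ≤ ε + M + j * (Ck' + |critValue c|) := by
  set α := critValue c with hα
  set f : ℕ → ℝ := fun l => c (p l) (p (l+1)) with hf
  have hsplit : ∑ l ∈ Finset.range n, f l =
      (∑ l ∈ Finset.range (n - j), f l) + ∑ l ∈ Finset.range j, f ((n - j) + l) := by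
    rw [← Finset.sum_range_add f (n - j) j, show (n - j) + j = n from by omega]
  have hchain : cChain c (n - j) x (p (n - j)) ≤ ∑ l ∈ Finset.range (n - j), f l :=
    cChain_le_sum hsl (p := p) hp0 rfl
  have hPhi1 : Phi c x (p (n - j)) ≤ (∑ l ∈ Finset.range (n - j), f l) + ((n - j : ℕ):ℝ) * α := by
    have := Phi_le_chain hsl x (p (n - j)) (n := n - j) (by omega)
    linarith
  have hPhi2 : -(κ * dist x (p (n - j)) + M) ≤ Phi c x (p (n - j)) := by
    have h1 := neg_Phi_le_Phi hsl x (p (n - j))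
    have h2 := hbd (p (n - j)) x
    rw [dist_comm (p (n - j)) x] at h2
    linarith
  have hP : (κ + 1) * dist x (p (n - j)) - j * Ck' ≤ ∑ l ∈ Finset.range j, f ((n - j) + l) := by
    have h1 : ∑ l ∈ Finset.range j, ((κ + 1) * dist (p ((n-j) + l)) (p ((n-j) + l + 1)) - Ck') ≤
        ∑ l ∈ Finset.range j, f ((n - j) + l) :=
      Finset.sum_le_sum fun l _ => hCk' _ _
    have h2 : ∑ l ∈ Finset.range j, ((κ + 1) * dist (p ((n-j) + l)) (p ((n-j) + l + 1)) - Ck') =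
        (κ + 1) * (∑ l ∈ Finset.range j, dist (p ((n-j) + l)) (p ((n-j) + l + 1))) - j * Ck' := by
      rw [Finset.sum_sub_distrib, ← Finset.mul_sum, Finset.sum_const, Finset.card_range,
        nsmul_eq_mul]
    have h3 : (κ + 1) * dist (p (n - j)) (p ((n - j) + j)) ≤
        (κ + 1) * (∑ l ∈ Finset.range j, dist (p ((n-j) + l)) (p ((n-j) + l + 1))) :=
      mul_le_mul_of_nonneg_left (dist_le_range_sum_dist (fun l => p ((n - j) + l)) j)
        (by linarith)
    rw [show (n - j) + j = n from by omega, hpn, dist_comm (p (n - j)) x] at h3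
    linarith
  have hcast : (n:ℝ) * α = ((n - j : ℕ):ℝ) * α + (j:ℝ) * α := by
    rw [Nat.cast_sub (by omega)]
    ring
  have e8 : (κ + 1) * dist x (p (n - j)) = κ * dist x (p (n - j)) + dist x (p (n - j)) := by ring
  have e9 : -((j:ℝ) * α) ≤ (j:ℝ) * |α| := by
    have h := mul_le_mul_of_nonneg_left (neg_le_abs α) (Nat.cast_nonneg (α := ℝ) j)
    linarith [h, (by ring : (j:ℝ) * -α = -((j:ℝ) * α))]
  have e10 : (j:ℝ) * (Ck' + |α|) = (j:ℝ) * Ck' + (j:ℝ) * |α| := by ring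
  rw [hsplit] at hdef
  linarith

/-! ### Periodization of loops -/

section Periodize

variable {n : ℕ} {x : X} {p : ℕ → X}

noncomputable def yper (p : ℕ → X) (n : ℕ) : ℤ → X := fun l => p ((l % (n:ℤ)).toNat)

theorem yper_nonneg_small (hn : 1 ≤ n) {i : ℕ} (hi : i < n) : yper p n (i : ℤ) = p i := by
  rw [yper, Int.emod_eq_of_lt (by positivity) (by exact_mod_cast hi)]
  simp

theorem yper_zero (hn : 1 ≤ n) (hp0 : p 0 = x) : yper p n 0 = x := by
  have := yper_nonneg_small (p := p) hn (Nat.lt_of_lt_of_le Nat.zero_lt_one hn)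
  simpa [hp0] using this

theorem yper_succ (hn : 1 ≤ n) (hp0 : p 0 = x) (hpn : p n = x) (l : ℤ) :
    yper p n (l + 1) = p ((l % (n:ℤ)).toNat + 1) := by
  have hn0 : (0:ℤ) < (n:ℤ) := by exact_mod_cast hn
  have hmod1 : 0 ≤ l % (n:ℤ) := Int.emod_nonneg l (by omega)
  have hmod2 : l % (n:ℤ) < n := Int.emod_lt_of_pos l hn0
  have hstep : (l + 1) % (n:ℤ) = (l % (n:ℤ) + 1) % (n:ℤ) := (Int.emod_add_emod l (n:ℤ) 1).symm
  rcases lt_or_eq_of_le (by omega : l % (n:ℤ) + 1 ≤ (n:ℤ)) with hlt | heq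
  · rw [yper, hstep, Int.emod_eq_of_lt (by omega) hlt]
    congr 1
    omega
  · rw [yper, hstep, heq, Int.emod_self]
    have : ((0:ℤ)).toNat = 0 := rfl
    rw [this, hp0, ← hpn]
    congr 1
    omega

theorem yper_period (hn : 1 ≤ n) (l : ℤ) : yper p n (l + n) = yper p n l := by
  rw [yper, yper]
  congr 2
  have : l + (n:ℤ) = l + (n:ℤ) * 1 := by ring
  rw [this, Int.add_mul_emod_self_left]

end Periodize

/-- Shift invariance of sums of a periodic function over a full period. -/
theorem periodic_shift_sum {g : ℤ → ℝ} {n : ℕ} (hper : ∀ l : ℤ, g (l + n) = g l) (m : ℤ) :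
    ∑ i ∈ Finset.range n, g (m + i) = ∑ i ∈ Finset.range n, g (0 + i) := by
  have hstep : ∀ m' : ℤ, ∑ i ∈ Finset.range n, g (m' + 1 + i) =
      ∑ i ∈ Finset.range n, g (m' + i) := by
    intro m'
    have h1 : ∑ i ∈ Finset.range (n + 1), g (m' + i) =
        (∑ i ∈ Finset.range n, g (m' + i)) + g (m' + n) := by
      rw [Finset.sum_range_succ]
    have h2 : ∑ i ∈ Finset.range (n + 1), g (m' + i) =
        (∑ i ∈ Finset.range n, g (m' + 1 + i)) + g m' := by
      rw [Finset.sum_range_succ' (fun i => g (m' + i)) n]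
      congr 1
      · refine Finset.sum_congr rfl fun i _ => ?_
        congr 1
        push_cast
        ring
      · norm_num
    linarith [h1, h2, hper m']
  induction m using Int.induction_on with
  | zero => rfl
  | succ i ih => rw [hstep i]; exact ih
  | pred i ih => rw [← ih, ← hstep (-(i:ℤ) - 1)]; norm_num

end AubryWork

namespace AubryWork

set_option linter.unusedSectionVars false

variable {X : Type*} [MetricSpace X] [Nonempty X] {c : X → X → ℝ} {κ M Ck' : ℝ}

theorem yper_window (hsl : UniformlySuperlinear c)
    {x : X} {n : ℕ} {p : ℕ → X} (hn : 1 ≤ n) (hp0 : p 0 = x) (hpn : p n = x)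
    {ε : ℝ} (hdef : (∑ l ∈ Finset.range n, c (p l) (p (l+1))) + n * critValue c ≤ ε)
    (m : ℤ) (k : ℕ) (hk : k + 1 ≤ n) :
    (∑ i ∈ Finset.range k, c (yper p n (m + i)) (yper p n (m + i + 1))) + k * critValue c
      + Phi c (yper p n (m + k)) (yper p n m) ≤ ε := by
  set α := critValue c with hα
  set g : ℤ → ℝ := fun l => c (yper p n l) (yper p n (l + 1)) with hg
  have hgper : ∀ l : ℤ, g (l + n) = g l := by
    intro l
    rw [hg]
    simp only
    rw [yper_period hn l, show l + (n:ℤ) + 1 = (l + 1) + (n:ℤ) from by ring,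
      yper_period hn (l + 1)]
  have hshift := periodic_shift_sum hgper m
  have hgf : ∑ i ∈ Finset.range n, g (0 + i) = ∑ i ∈ Finset.range n, c (p i) (p (i+1)) := by
    refine Finset.sum_congr rfl fun i hi => ?_
    have hi' := Finset.mem_range.mp hi
    rw [hg]
    simp only [zero_add]
    rw [yper_succ hn hp0 hpn, yper_nonneg_small hn hi']
    congr 2
    rw [Int.emod_eq_of_lt (by positivity) (by exact_mod_cast hi')]
    simp
  have hsplitk : ∑ i ∈ Finset.range n, g (m + i) =
      (∑ i ∈ Finset.range k, g (m + i)) + ∑ i ∈ Finset.range (n - k), g (m + k + i) := by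
    rw [show n = k + (n - k) from by omega, Finset.sum_range_add]
    congr 1
    refine Finset.sum_congr (by congr 1; omega) fun i _ => ?_
    congr 1
    push_cast
    ring
  have hchain : cChain c (n - k) (yper p n (m + k)) (yper p n m) ≤
      ∑ i ∈ Finset.range (n - k), g (m + k + i) := by
    have hq0 : (fun i : ℕ => yper p n (m + k + i)) 0 = yper p n (m + k) := by norm_num
    have hqe : (fun i : ℕ => yper p n (m + k + i)) (n - k) = yper p n m := by
      show yper p n (m + k + ((n - k : ℕ) : ℤ)) = yper p n m
      rw [show m + (k:ℤ) + ((n - k : ℕ) : ℤ) = m + (n:ℤ) from by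
        push_cast [Nat.cast_sub (by omega : k ≤ n)]; ring]
      exact yper_period hn m
    have := cChain_le_sum hsl (p := fun i : ℕ => yper p n (m + k + i)) hq0 hqe
    refine le_trans this (le_of_eq (Finset.sum_congr rfl fun i _ => ?_))
    rw [hg]
    simp only
    congr 2
    push_cast
    ring
  have hPhik : Phi c (yper p n (m + k)) (yper p n m) ≤
      (∑ i ∈ Finset.range (n - k), g (m + k + i)) + ((n - k : ℕ):ℝ) * α := by
    have := Phi_le_chain hsl (yper p n (m + k)) (yper p n m) (n := n - k) (by omega)
    linarith
  have hcast : (n:ℝ) * α = (k:ℝ) * α + ((n - k : ℕ):ℝ) * α := by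
    rw [Nat.cast_sub (by omega)]
    ring
  have hsum_eq : ∑ i ∈ Finset.range k, c (yper p n (m + i)) (yper p n (m + i + 1)) =
      ∑ i ∈ Finset.range k, g (m + i) := rfl
  rw [hsum_eq]
  rw [hshift, hgf] at hsplitk
  linarith

theorem yper_window_dist (hsl : UniformlySuperlinear c)
    (hκ0 : 0 ≤ κ) (hM0 : 0 ≤ M) (hCk'0 : 0 ≤ Ck')
    (hbd : ∀ a b : X, Phi c a b ≤ κ * dist a b + M)
    (hCk' : ∀ x y : X, (κ + 1) * dist x y - Ck' ≤ c x y)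
    {x : X} {n : ℕ} {p : ℕ → X} (hp0 : p 0 = x) (hpn : p n = x)
    {ε : ℝ} (hdef : (∑ l ∈ Finset.range n, c (p l) (p (l+1))) + n * critValue c ≤ ε)
    (hε2 : ε ≤ 2) {mw : ℕ} (hnw : 2 * mw + 2 ≤ n) {l : ℤ} (hl : |l| ≤ (mw:ℤ)) :
    dist x (yper p n l) ≤ 2 + M + mw * (Ck' + |critValue c|) := by
  have hn0 : (0:ℤ) < (n:ℤ) := by exact_mod_cast (by omega : 0 < n)
  have habs : 0 ≤ Ck' + |critValue c| := by positivity
  rcases le_or_gt 0 l with hl0 | hl0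
  · -- forward case
    have hl' : l ≤ (mw:ℤ) := by rwa [abs_of_nonneg hl0] at hl
    have hln : l % (n:ℤ) = l := Int.emod_eq_of_lt hl0 (by omega)
    have hir : (l % (n:ℤ)).toNat = l.toNat := by rw [hln]
    have hynat : yper p n l = p l.toNat := by rw [yper, hir]
    have hfwd := loop_forward hsl hκ0 hbd hCk' hp0 hpn hdef
      (i := l.toNat) (by omega)
    rw [hynat]
    have hcastle : (l.toNat : ℝ) ≤ (mw : ℝ) := by exact_mod_cast (by omega : l.toNat ≤ mw)
    have : (l.toNat:ℝ) * (Ck' + |critValue c|) ≤ (mw:ℝ) * (Ck' + |critValue c|) :=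
      mul_le_mul_of_nonneg_right hcastle habs
    linarith
  · -- backward case
    have hl' : -l ≤ (mw:ℤ) := by rwa [abs_of_neg hl0] at hl
    set j := (-l).toNat with hj
    have hj1 : 1 ≤ j := by omega
    have hjmw : j ≤ mw := by omega
    have hln : l % (n:ℤ) = l + n := by
      have h1 : (l + n) % (n:ℤ) = l % (n:ℤ) := by
        rw [show l + (n:ℤ) = l + (n:ℤ) * 1 from by ring, Int.add_mul_emod_self_left]
      rw [← h1, Int.emod_eq_of_lt (by omega) (by omega)]
    have hir : (l % (n:ℤ)).toNat = n - j := by omega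
    have hynat : yper p n l = p (n - j) := by rw [yper, hir]
    have hbwd := loop_backward hsl hκ0 hbd hCk' hp0 hpn hdef hj1 (by omega)
    rw [hynat]
    have hcastle : (j : ℝ) ≤ (mw : ℝ) := by exact_mod_cast hjmw
    have : (j:ℝ) * (Ck' + |critValue c|) ≤ (mw:ℝ) * (Ck' + |critValue c|) :=
      mul_le_mul_of_nonneg_right hcastle habs
    linarith

theorem dominated_window {u : X → ℝ} {α : ℝ} (hu : Dominated c α u)
    (y : ℤ → X) (m : ℤ) (k : ℕ) :
    u (y (m + k)) - u (y m) ≤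
      (∑ i ∈ Finset.range k, c (y (m + i)) (y (m + i + 1))) + k * α := by
  have h := dominated_chain hu (fun i : ℕ => y (m + i)) k
  have h0 : m + ((0:ℕ):ℤ) = m := by norm_num
  rw [h0] at h
  refine le_trans h (le_of_eq ?_)
  congr 1
  refine Finset.sum_congr rfl fun i _ => ?_
  congr 2
  push_cast
  ring

end AubryWork

namespace AubryWork

set_option linter.unusedSectionVars false

variable {X : Type*} [MetricSpace X] [Nonempty X] {c : X → X → ℝ} {B K : ℝ}

theorem aubry_of_peierls_zero [ProperSpace X] (hB : 1 ≤ B) (hK : 0 < K)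
    (hlen : IsBLengthSpaceAtScale X B K)
    (hcont : Continuous fun q : X × X => c q.1 q.2)
    (hsl : UniformlySuperlinear c) (hub : UniformlyBounded c)
    {x : X} (hx : peierls c (critValue c) x x = (0 : EReal)) :
    x ∈ projAubrySet c := by
  classical
  set α := critValue c with hα
  obtain ⟨κ, M, hκ0, hM0, hbd⟩ := Phi_kappa hB hK hlen hsl hub
  obtain ⟨Ck, hCk0⟩ := hsl (κ + 1) (by linarith)
  set Ck' := max Ck 0 with hCk'def
  have hCk'0 : 0 ≤ Ck' := le_max_right _ _
  have hCk' : ∀ a b : X, (κ + 1) * dist a b - Ck' ≤ c a b := fun a b => by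
    have h1 := hCk0 a b
    have h2 : Ck ≤ Ck' := le_max_left _ _
    linarith
  -- Step 1: extract near-optimal loops
  have hloops : ∀ j : ℕ, ∃ (n : ℕ) (p : ℕ → X), j + 2 ≤ n ∧ p 0 = x ∧ p n = x ∧
      (∑ l ∈ Finset.range n, c (p l) (p (l+1))) + n * α ≤ 2 / (j + 1) := by
    intro j
    have hj1 : (0:ℝ) < 1 / ((j:ℝ) + 1) := by positivity
    have hfreq : ∃ᶠ n in atTop,
        ((cChain c n x x + n * α : ℝ) : EReal) < ((1/((j:ℝ)+1) : ℝ) : EReal) := by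
      by_contra hcon
      rw [Filter.not_frequently] at hcon
      have hev : ∀ᶠ n in atTop,
          ((1/((j:ℝ)+1) : ℝ) : EReal) ≤ ((cChain c n x x + n * α : ℝ) : EReal) := by
        filter_upwards [hcon] with n hn
        exact not_lt.mp hn
      have hle : ((1/((j:ℝ)+1) : ℝ) : EReal) ≤ peierls c α x x := by
        rw [peierls, Filter.liminf_eq]
        exact le_sSup hev
      rw [hα, hx] at hle
      have hle' : (1/((j:ℝ)+1) : ℝ) ≤ 0 := by exact_mod_cast hle
      linarith
    obtain ⟨n, hn, hnlt⟩ := Filter.frequently_atTop.mp hfreq (j + 2)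
    have hnlt' : cChain c n x x + n * α < 1/((j:ℝ)+1) := by exact_mod_cast hnlt
    obtain ⟨s, ⟨p, hp0, hpn, rfl⟩, hs⟩ :=
      Real.lt_sInf_add_pos (cChain_set_nonempty (c := c) x x (by omega : 1 ≤ n)) hj1
    refine ⟨n, p, hn, hp0, hpn, ?_⟩
    rw [show sInf {r : ℝ | ∃ p : ℕ → X, p 0 = x ∧ p n = x ∧
      r = ∑ i ∈ Finset.range n, c (p i) (p (i + 1))} = cChain c n x x from rfl] at hs
    have h2 : 2/((j:ℝ)+1) = 1/((j:ℝ)+1) + 1/((j:ℝ)+1) := by ring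
    linarith
  choose nj pj hnj hp0j hpnj hdefj using hloops
  have hdef2 : ∀ j, (∑ l ∈ Finset.range (nj j), c (pj j l) (pj j (l+1)))
      + (nj j) * α ≤ 2 := by
    intro j
    refine le_trans (hdefj j) ?_
    rw [div_le_iff₀ (by positivity)]
    nlinarith [Nat.cast_nonneg (α := ℝ) j]
  -- Step 2: compactness extraction
  set R : ℤ → ℝ := fun i => 2 + M + (i.natAbs : ℝ) * (Ck' + |α|) with hR
  have habsnn : 0 ≤ Ck' + |α| := by positivity
  have hR0 : ∀ i, 0 ≤ R i := by
    intro i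
    have h1 : (0:ℝ) ≤ (i.natAbs : ℝ) * (Ck' + |α|) := by positivity
    rw [hR]
    simp only
    linarith
  set Y : ℕ → (∀ _ : ℤ, X) := fun j => fun i =>
    if 2 * i.natAbs + 2 ≤ nj j then yper (pj j) (nj j) i else x with hY
  have hYmem : ∀ j, Y j ∈ Set.pi Set.univ (fun i : ℤ => closedBall x (R i)) := by
    intro j i _
    rw [hY]
    simp only
    split_ifs with hcut
    · rw [mem_closedBall, dist_comm]
      exact yper_window_dist hsl hκ0 hM0 hCk'0 hbd hCk' (hp0j j) (hpnj j) (hdef2 j)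
        le_rfl hcut (by rw [Int.abs_eq_natAbs])
    · exact mem_closedBall_self (hR0 i)
  have hScomp : IsCompact (Set.pi Set.univ (fun i : ℤ => closedBall x (R i))) :=
    isCompact_univ_pi fun i => isCompact_closedBall x (R i)
  obtain ⟨y, hyS, φ, hφ, hφtend⟩ := hScomp.tendsto_subseq hYmem
  have hφge : ∀ l, l ≤ φ l := fun l => hφ.le_apply
  have hcoordY : ∀ i : ℤ, Tendsto (fun l => Y (φ l) i) atTop (𝓝 (y i)) := fun i =>
    ((continuous_apply i).tendsto y).comp hφtend
  have hcoord : ∀ i : ℤ, Tendsto (fun l => yper (pj (φ l)) (nj (φ l)) i) atTop (𝓝 (y i)) := by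
    intro i
    have hev : (fun l => Y (φ l) i) =ᶠ[atTop]
        (fun l => yper (pj (φ l)) (nj (φ l)) i) := by
      filter_upwards [Filter.eventually_ge_atTop (2 * i.natAbs)] with l hl
      rw [hY]
      simp only
      rw [if_pos]
      have h1 := hnj (φ l)
      have h2 := hφge l
      omega
    exact Filter.Tendsto.congr' hev (hcoordY i)
  have hy0 : y 0 = x := by
    have h2 : ∀ l : ℕ, Y (φ l) 0 = x := by
      intro l
      rw [hY]
      simp only
      rw [if_pos (by have := hnj (φ l); simp; omega)]
      exact yper_zero (by have := hnj (φ l); omega) (hp0j (φ l))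
    exact tendsto_nhds_unique ((Filter.tendsto_congr h2).mp (hcoordY 0)) tendsto_const_nhds
  -- Step 3: calibration of the limit sequence
  intro u hu
  refine ⟨y, ?_, hy0⟩
  intro m k
  rcases Nat.eq_zero_or_pos k with rfl | hk1
  · simp
  set S := ∑ i ∈ Finset.range k, c (y (m + i)) (y (m + i + 1)) with hS
  have hupper := dominated_window hu y m k
  have hkey : S + k * α + Phi c (y (m + k)) (y m) ≤ 0 := by
    by_contra hcon
    push_neg at hcon
    set ε := (S + k * α + Phi c (y (m + k)) (y m)) / 2 with hε
    have hεpos : 0 < ε := by rw [hε]; linarith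
    have hε3 : (0:ℝ) < ε / 3 := by linarith
    obtain ⟨δ, hδ0, hδ⟩ := Phi_lsc hB hK hlen hcont hsl hub (y (m + k)) (y m) hε3
    have hev1 : ∀ᶠ l in atTop,
        dist (y (m + k)) (yper (pj (φ l)) (nj (φ l)) (m + k)) ≤ δ := by
      obtain ⟨N, hN⟩ := Metric.tendsto_atTop.mp (hcoord (m + k)) δ hδ0
      refine Filter.eventually_atTop.mpr ⟨N, fun l hl => ?_⟩
      have := hN l hl
      rw [dist_comm]
      exact le_of_lt this
    have hev2 : ∀ᶠ l in atTop, dist (y m) (yper (pj (φ l)) (nj (φ l)) m) ≤ δ := by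
      obtain ⟨N, hN⟩ := Metric.tendsto_atTop.mp (hcoord m) δ hδ0
      refine Filter.eventually_atTop.mpr ⟨N, fun l hl => ?_⟩
      have := hN l hl
      rw [dist_comm]
      exact le_of_lt this
    have htendS : Tendsto (fun l => ∑ i ∈ Finset.range k,
        c (yper (pj (φ l)) (nj (φ l)) (m + i)) (yper (pj (φ l)) (nj (φ l)) (m + i + 1)))
        atTop (𝓝 S) := by
      rw [hS]
      refine tendsto_finset_sum _ fun i _ => ?_
      exact (hcont.tendsto (y (m + i), y (m + i + 1))).comp
        ((hcoord (m + i)).prodMk_nhds (hcoord (m + i + 1)))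
    have hev3 : ∀ᶠ l in atTop, |(∑ i ∈ Finset.range k,
        c (yper (pj (φ l)) (nj (φ l)) (m + i)) (yper (pj (φ l)) (nj (φ l)) (m + i + 1))) - S|
        < ε/3 := by
      obtain ⟨N, hN⟩ := Metric.tendsto_atTop.mp htendS (ε/3) hε3
      refine Filter.eventually_atTop.mpr ⟨N, fun l hl => ?_⟩
      have := hN l hl
      rwa [Real.dist_eq] at this
    have hev4 : ∀ᶠ l in atTop, k + 1 ≤ nj (φ l) := by
      refine Filter.eventually_atTop.mpr ⟨k, fun l hl => ?_⟩
      have h1 := hnj (φ l)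
      have h2 := hφge l
      omega
    have hev5 : ∀ᶠ l in atTop, 2 / ((φ l : ℝ) + 1) ≤ ε/3 := by
      obtain ⟨N, hN⟩ := exists_nat_ge (6/ε : ℝ)
      refine Filter.eventually_atTop.mpr ⟨N, fun l hl => ?_⟩
      have h1 : (6/ε : ℝ) ≤ (φ l : ℝ) + 1 := by
        have h2 : (N:ℝ) ≤ (φ l : ℝ) := by exact_mod_cast le_trans hl (hφge l)
        linarith
      have hφpos : (0:ℝ) < (φ l : ℝ) + 1 := by positivity
      rw [div_le_iff₀ hφpos]
      have h3 := mul_le_mul_of_nonneg_left h1 (le_of_lt hε3)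
      have heq : ε/3 * (6/ε) = 2 := by field_simp; ring
      linarith
    obtain ⟨l, h1, h2, h3, h4, h5⟩ :=
      (hev1.and (hev2.and (hev3.and (hev4.and hev5)))).exists
    have hwin := yper_window hsl (n := nj (φ l)) (by have := hnj (φ l); omega)
      (hp0j (φ l)) (hpnj (φ l)) (hdefj (φ l)) m k h4
    have hlsc := hδ _ _ h1 h2
    have habs := abs_sub_lt_iff.mp h3
    rw [← hα] at hwin
    linarith [habs.2, hwin, hlsc, h5]
  have hlow : u (y m) - u (y (m + k)) ≤ Phi c (y (m + k)) (y m) := usub_le_Phi hu _ _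
  have heq : u (y (m + k)) = u (y m) + S + k * α := by linarith
  exact heq

end AubryWork


theorem aubry_eq_zero_set_of_peierls {X : Type*} [MetricSpace X] [Nonempty X] [ProperSpace X]
    {B K : ℝ} (hB : 1 ≤ B) (hK : 0 < K) (hlen : IsBLengthSpaceAtScale X B K)
    {c : X → X → ℝ} (hcont : Continuous fun q : X × X => c q.1 q.2)
    (hsl : UniformlySuperlinear c) (hub : UniformlyBounded c) :
    projAubrySet c = {x : X | peierls c (critValue c) x x = (0 : EReal)} := by
  ext x
  simp only [Set.mem_setOf_eq]
  constructor
  · intro hx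
    exact AubryWork.peierls_diag_zero_of_aubry hsl hx
  · intro hx
    exact AubryWork.aubry_of_peierls_zero hB hK hlen hcont hsl hub hx
end
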